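/- arXiv:1501.00079 — 5 statements merged into one kernel-verified Lean document; each statement's English description precedes it below -/
import Mathlib

section
/- Let G be a connected simple graph with n > 3 vertices and m edges. If G is triangle-free, then mc(G) = m − n + 2. -/
open SimpleGraph Filter Real

/-- An edge-coloring `c` (colors on vertex pairs, only the values on edges matter)
of `G` is a monochromatic connection coloring (MC-coloring) if every two vertices
are joined by a path all of whose edges receive the same color. -/
def IsMCColoring {V : Type*} (G : SimpleGraph V) (c : Sym2 V → ℕ) : Prop :=
  ∀ u v : V, ∃ p : G.Walk u v, p.IsPath ∧ ∃ k : ℕ, ∀ e ∈ p.edges, c e = k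

/-- `mcNum G` is the maximum number of colors (counted on the edges of `G`)
used in an MC-coloring of `G`; it is `0` if `G` admits no MC-coloring
(in particular if `G` is disconnected). -/
noncomputable def mcNum {V : Type*} (G : SimpleGraph V) : ℕ :=
  sSup {k | ∃ c : Sym2 V → ℕ, IsMCColoring G c ∧ (Set.image c G.edgeSet).ncard = k}

set_option linter.unusedSectionVars false

namespace MCAux

variable {V : Type*} [Fintype V] [DecidableEq V]

/-- Decompose a walk with distinct endpoints into its first edge and the rest. -/
lemma firstEdge {G : SimpleGraph V} {u w : V} (p : G.Walk u w) (h : u ≠ w) :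
    ∃ (b : V) (hadj : G.Adj u b) (q : G.Walk b w), p = SimpleGraph.Walk.cons hadj q := by
  cases p with
  | nil => exact absurd rfl h
  | cons hadj q => exact ⟨_, hadj, q, rfl⟩

/-- Every vertex reachable to `x` and different from `x` has a neighbor strictly
closer to `x`. -/
lemma exists_parent (H : SimpleGraph V) (x v : V) (hne : v ≠ x) (hr : H.Reachable v x) :
    ∃ w, H.Adj v w ∧ H.dist w x < H.dist v x := by
  obtain ⟨p, hp⟩ := hr.exists_walk_length_eq_dist
  obtain ⟨b, hadj, q, rfl⟩ := firstEdge p hne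
  refine ⟨b, hadj, ?_⟩
  have h1 : H.dist b x ≤ q.length := SimpleGraph.dist_le q
  have h2 : (SimpleGraph.Walk.cons hadj q).length = q.length + 1 := rfl
  omega

/-- A total "parent" function towards `x`. -/
lemma exists_parent_fun (H : SimpleGraph V) (x : V) :
    ∃ pa : V → V, ∀ v, v ≠ x → H.Reachable v x →
      H.Adj v (pa v) ∧ H.dist (pa v) x < H.dist v x := by
  have h : ∀ v : V, ∃ w : V, v ≠ x → H.Reachable v x →
      H.Adj v w ∧ H.dist w x < H.dist v x := by
    intro v
    by_cases hv : v ≠ x ∧ H.Reachable v x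
    · obtain ⟨w, hw⟩ := exists_parent H x v hv.1 hv.2
      exact ⟨w, fun _ _ => hw⟩
    · exact ⟨v, fun h1 h2 => absurd ⟨h1, h2⟩ hv⟩
  choose pa hpa using h
  exact ⟨pa, hpa⟩

/-- Injectivity of the parent-edge map. -/
lemma inj_part (H : SimpleGraph V) (x : V) (sF : Finset V) (eF : Finset (Sym2 V))
    (pa : V → V)
    (hpa : ∀ v, v ≠ x → H.Reachable v x → H.Adj v (pa v) ∧ H.dist (pa v) x < H.dist v x)
    (hs : ∀ u, u ∈ sF ↔ H.Reachable u x)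
    (he : ∀ e, e ∈ eF ↔ e ∈ H.edgeSet ∧ ∃ u ∈ e, H.Reachable u x) :
    (sF.erase x).card ≤ eF.card := by
  classical
  apply Finset.card_le_card_of_injOn (fun v => s(v, pa v))
  · intro v hv
    have hvx : v ≠ x := Finset.ne_of_mem_erase hv
    have hvr : H.Reachable v x := (hs v).1 (Finset.mem_of_mem_erase hv)
    obtain ⟨hadj, _⟩ := hpa v hvx hvr
    exact (he _).2 ⟨(SimpleGraph.mem_edgeSet H).2 hadj, v, Sym2.mem_mk_left _ _, hvr⟩
  · intro a ha b hb hab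
    have hax : a ≠ x := Finset.ne_of_mem_erase ha
    have har : H.Reachable a x := (hs a).1 (Finset.mem_of_mem_erase ha)
    have hbx : b ≠ x := Finset.ne_of_mem_erase hb
    have hbr : H.Reachable b x := (hs b).1 (Finset.mem_of_mem_erase hb)
    have hda := (hpa a hax har).2
    have hdb := (hpa b hbx hbr).2
    simp only [Sym2.eq_iff] at hab
    rcases hab with ⟨h1, _⟩ | ⟨h1, h2⟩
    · exact h1
    · exfalso; rw [← h1] at hdb; rw [h2] at hda; omega

/-- Key counting lemma: the size of the reachability class of `x`
is at most one more than the number of edges touching that class. -/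
lemma card_reach_le (H : SimpleGraph V) (x : V) (sF : Finset V) (eF : Finset (Sym2 V))
    (hs : ∀ u, u ∈ sF ↔ H.Reachable u x)
    (he : ∀ e, e ∈ eF ↔ e ∈ H.edgeSet ∧ ∃ u ∈ e, H.Reachable u x) :
    sF.card ≤ eF.card + 1 := by
  classical
  obtain ⟨pa, hpa⟩ := exists_parent_fun H x
  have hx : x ∈ sF := (hs x).2 (SimpleGraph.Reachable.refl x)
  have hle := inj_part H x sF eF pa hpa hs he
  have := Finset.card_erase_add_one hx
  omega

/-- Walking to the root through parent edges. -/
lemma exists_tree_walk (G : SimpleGraph V) (hG : G.Connected) (x : V) (pa : V → V)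
    (hpa : ∀ v, v ≠ x → G.Adj v (pa v) ∧ G.dist (pa v) x < G.dist v x) (u : V) :
    ∃ w : G.Walk u x, ∀ e ∈ w.edges,
      e ∈ (Finset.univ.erase x).image (fun v => s(v, pa v)) := by
  suffices H : ∀ n u, G.dist u x = n → ∃ w : G.Walk u x, ∀ e ∈ w.edges,
      e ∈ (Finset.univ.erase x).image (fun v => s(v, pa v)) from H _ u rfl
  intro n
  induction n using Nat.strong_induction_on with
  | _ n ih =>
    intro u hu
    by_cases hux : u = x
    · subst hux
      exact ⟨SimpleGraph.Walk.nil, by simp⟩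
    · obtain ⟨hadj, hlt⟩ := hpa u hux
      rw [hu] at hlt
      obtain ⟨w', hw'⟩ := ih _ hlt (pa u) rfl
      refine ⟨SimpleGraph.Walk.cons hadj w', ?_⟩
      intro e he
      rw [SimpleGraph.Walk.edges_cons, List.mem_cons] at he
      rcases he with rfl | he
      · exact Finset.mem_image.2 ⟨u, Finset.mem_erase.2 ⟨hux, Finset.mem_univ u⟩, rfl⟩
      · exact hw' e he

/-- The lower bound: there is an MC-coloring with `m - n + 2` colors. -/
lemma lower_bound (G : SimpleGraph V) [DecidableRel G.Adj] (hG : G.Connected)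
    (hn : 1 < Fintype.card V) :
    ∃ N : ℕ, (∃ c : Sym2 V → ℕ, IsMCColoring G c ∧ (Set.image c G.edgeSet).ncard = N) ∧
      N + Fintype.card V = G.edgeFinset.card + 2 := by
  classical
  have : Nonempty V := Fintype.card_pos_iff.1 (by omega)
  obtain ⟨x⟩ := this
  obtain ⟨pa, hpa0⟩ := exists_parent_fun G x
  have hpa : ∀ v, v ≠ x → G.Adj v (pa v) ∧ G.dist (pa v) x < G.dist v x :=
    fun v hv => hpa0 v hv (hG v x)
  set P : Finset (Sym2 V) := (Finset.univ.erase x).image (fun v => s(v, pa v)) with hP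
  have hPsub : P ⊆ G.edgeFinset := by
    intro e he
    obtain ⟨v, hv, rfl⟩ := Finset.mem_image.1 he
    exact SimpleGraph.mem_edgeFinset.2
      ((SimpleGraph.mem_edgeSet G).2 (hpa v (Finset.ne_of_mem_erase hv)).1)
  have hPcard : P.card + 1 = Fintype.card V := by
    have hinj : Set.InjOn (fun v => s(v, pa v)) (Finset.univ.erase x) := by
      intro a ha b hb hab
      have hda := (hpa a (Finset.ne_of_mem_erase ha)).2
      have hdb := (hpa b (Finset.ne_of_mem_erase hb)).2
      simp only [Sym2.eq_iff] at hab
      rcases hab with ⟨h1, _⟩ | ⟨h1, h2⟩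
      · exact h1
      · exfalso; rw [← h1] at hdb; rw [h2] at hda; omega
    rw [hP, Finset.card_image_of_injOn hinj]
    exact Finset.card_erase_add_one (Finset.mem_univ x)
  set ι : Sym2 V → ℕ := fun e => ((Fintype.equivFin (Sym2 V)) e : ℕ) with hι
  set c : Sym2 V → ℕ := fun e => if e ∈ P then 0 else ι e + 1 with hc
  have hmc : IsMCColoring G c := by
    intro u v
    obtain ⟨wu, hwu⟩ := exists_tree_walk G hG x pa hpa u
    obtain ⟨wv, hwv⟩ := exists_tree_walk G hG x pa hpa v
    set w : G.Walk u v := wu.append wv.reverse with hw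
    refine ⟨w.bypass, SimpleGraph.Walk.bypass_isPath w, 0, ?_⟩
    intro e he
    have hew : e ∈ w.edges := SimpleGraph.Walk.edges_bypass_subset w he
    rw [hw, SimpleGraph.Walk.edges_append, List.mem_append] at hew
    have heP : e ∈ P := by
      rcases hew with h | h
      · exact hwu e h
      · rw [SimpleGraph.Walk.edges_reverse, List.mem_reverse] at h
        exact hwv e h
    simp [hc, heP]
  have himg : G.edgeFinset.image c
      = insert 0 ((G.edgeFinset \ P).image fun e => ι e + 1) := by
    ext a
    simp only [Finset.mem_image, Finset.mem_insert, Finset.mem_sdiff]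
    constructor
    · rintro ⟨e, he, rfl⟩
      by_cases heP : e ∈ P
      · left; simp [hc, heP]
      · right; exact ⟨e, ⟨he, heP⟩, by simp [hc, heP]⟩
    · rintro (rfl | ⟨e, ⟨he, heP⟩, rfl⟩)
      · obtain ⟨v₀, hv₀⟩ := Fintype.exists_ne_of_one_lt_card hn x
        refine ⟨s(v₀, pa v₀), ?_, ?_⟩
        · exact hPsub (Finset.mem_image.2
            ⟨v₀, Finset.mem_erase.2 ⟨hv₀, Finset.mem_univ _⟩, rfl⟩)
        · have : s(v₀, pa v₀) ∈ P := Finset.mem_image.2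
            ⟨v₀, Finset.mem_erase.2 ⟨hv₀, Finset.mem_univ _⟩, rfl⟩
          simp [hc, this]
      · exact ⟨e, he, by simp [hc, heP]⟩
  have hinj2 : Function.Injective (fun e => ι e + 1) := by
    intro a b hab
    simp only [hι] at hab
    have : ((Fintype.equivFin (Sym2 V)) a : ℕ) = ((Fintype.equivFin (Sym2 V)) b : ℕ) := by
      omega
    exact (Fintype.equivFin (Sym2 V)).injective (Fin.val_injective this)
  have hnotmem : (0 : ℕ) ∉ (G.edgeFinset \ P).image fun e => ι e + 1 := by
    simp only [Finset.mem_image]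
    rintro ⟨e, _, h⟩
    omega
  have hcard : (G.edgeFinset.image c).card = (G.edgeFinset \ P).card + 1 := by
    rw [himg, Finset.card_insert_of_notMem hnotmem, Finset.card_image_of_injective _ hinj2]
  refine ⟨(G.edgeFinset \ P).card + 1, ⟨c, hmc, ?_⟩, ?_⟩
  · have hcoe : Set.image c G.edgeSet = ↑(G.edgeFinset.image c) := by
      rw [Finset.coe_image, SimpleGraph.coe_edgeFinset]
    rw [hcoe, Set.ncard_coe_finset, hcard]
  · have h2 := Finset.card_sdiff_add_card_eq_card hPsub
    omega

/-- Per-color-class counting bound for the upper bound. -/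
lemma class_bound (G : SimpleGraph V) [DecidableRel G.Adj]
    (c : Sym2 V → ℕ) (x y : V) (hxy : G.Adj x y)
    (D : Finset V) (hD : D = Finset.univ \ {x, y})
    (z : V → V) (col : V → ℕ)
    (hz : ∀ v ∈ D, (z v = x ∨ z v = y) ∧ ¬ G.Adj v (z v) ∧
      ∃ p : G.Walk v (z v), ∀ e ∈ p.edges, c e = col v)
    (k : ℕ) (hk : ∃ e ∈ G.edgeFinset, c e = k) :
    (D.filter fun v => col v = k).card + 1 ≤ (G.edgeFinset.filter fun e => c e = k).card := by
  classical
  set H : SimpleGraph V := SimpleGraph.fromEdgeSet {e | e ∈ G.edgeSet ∧ c e = k} with hH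
  have hHedge : H.edgeSet = {e | e ∈ G.edgeSet ∧ c e = k} := by
    rw [hH, SimpleGraph.edgeSet_fromEdgeSet]
    ext e
    constructor
    · rintro ⟨he, _⟩; exact he
    · intro he; exact ⟨he, G.not_isDiag_of_mem_edgeSet he.1⟩
  have hHG : ∀ a b, H.Adj a b → G.Adj a b := by
    intro a b hab
    have : s(a, b) ∈ H.edgeSet := (SimpleGraph.mem_edgeSet H).2 hab
    rw [hHedge] at this
    exact (SimpleGraph.mem_edgeSet G).1 this.1
  set Ek : Finset (Sym2 V) := G.edgeFinset.filter (fun e => c e = k) with hEk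
  have hEkmem : ∀ e, e ∈ Ek ↔ e ∈ H.edgeSet := by
    intro e
    rw [hEk, Finset.mem_filter, hHedge, SimpleGraph.mem_edgeFinset]
    rfl
  set C : Finset V := D.filter (fun v => col v = k) with hC
  -- basic membership facts
  have hCD : ∀ v ∈ C, v ∈ D := fun v hv => (Finset.mem_filter.1 hv).1
  have hDxy : ∀ v ∈ D, v ≠ x ∧ v ≠ y := by
    intro v hv
    rw [hD, Finset.mem_sdiff, Finset.mem_insert, Finset.mem_singleton] at hv
    push_neg at hv
    exact hv.2
  have hreach : ∀ v ∈ C, H.Reachable v (z v) := by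
    intro v hv
    obtain ⟨_, _, p, hp⟩ := hz v (hCD v hv)
    have hcol : col v = k := (Finset.mem_filter.1 hv).2
    have hmem : ∀ e ∈ p.edges, e ∈ H.edgeSet := by
      intro e he
      rw [hHedge]
      exact ⟨p.edges_subset_edgeSet he, by rw [hp e he, hcol]⟩
    exact ⟨p.transfer H hmem⟩
  -- reachability vertex sets and edge sets
  set sx : Finset V := Finset.univ.filter (fun u => H.Reachable u x) with hsx
  set sy : Finset V := Finset.univ.filter (fun u => H.Reachable u y) with hsy
  set ex : Finset (Sym2 V) :=
    Ek.filter (fun e => ∃ u ∈ e, H.Reachable u x) with hex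
  set ey : Finset (Sym2 V) :=
    Ek.filter (fun e => ∃ u ∈ e, H.Reachable u y) with hey
  have hsx_mem : ∀ u, u ∈ sx ↔ H.Reachable u x := by
    intro u; rw [hsx, Finset.mem_filter]; simp
  have hsy_mem : ∀ u, u ∈ sy ↔ H.Reachable u y := by
    intro u; rw [hsy, Finset.mem_filter]; simp
  have hex_mem : ∀ e, e ∈ ex ↔ e ∈ H.edgeSet ∧ ∃ u ∈ e, H.Reachable u x := by
    intro e; rw [hex, Finset.mem_filter, hEkmem]
  have hey_mem : ∀ e, e ∈ ey ↔ e ∈ H.edgeSet ∧ ∃ u ∈ e, H.Reachable u y := by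
    intro e; rw [hey, Finset.mem_filter, hEkmem]
  have hxcount : sx.card ≤ ex.card + 1 := card_reach_le H x sx ex hsx_mem hex_mem
  have hycount : sy.card ≤ ey.card + 1 := card_reach_le H y sy ey hsy_mem hey_mem
  have hexEk : ex ⊆ Ek := Finset.filter_subset _ _
  have heyEk : ey ⊆ Ek := Finset.filter_subset _ _
  have hEkpos : 1 ≤ Ek.card := by
    obtain ⟨e, he, hce⟩ := hk
    exact Finset.card_pos.2 ⟨e, Finset.mem_filter.2 ⟨he, hce⟩⟩
  by_cases hr : H.Reachable x y
  -- Case (a): x and y in the same H-component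
  · have hsub : insert x (insert y C) ⊆ sx := by
      intro v hv
      rw [Finset.mem_insert, Finset.mem_insert] at hv
      rcases hv with rfl | rfl | hv
      · exact (hsx_mem v).2 (SimpleGraph.Reachable.refl v)
      · exact (hsx_mem v).2 hr.symm
      · rcases (hz v (hCD v hv)).1 with hzv | hzv
        · exact (hsx_mem v).2 (hzv ▸ hreach v hv)
        · exact (hsx_mem v).2 ((hzv ▸ hreach v hv).trans hr.symm)
    have hxC : x ∉ insert y C := by
      rw [Finset.mem_insert]
      rintro (h | h)
      · exact hxy.ne h
      · exact (hDxy x (hCD x h)).1 rfl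
    have hyC : y ∉ C := fun h => (hDxy y (hCD y h)).2 rfl
    have hcards : C.card + 2 ≤ sx.card := by
      have := Finset.card_le_card hsub
      rw [Finset.card_insert_of_notMem hxC, Finset.card_insert_of_notMem hyC] at this
      omega
    have := Finset.card_le_card hexEk
    omega
  -- Case (b): x and y in different H-components
  · set Cx : Finset V := C.filter (fun v => z v = x) with hCx
    set Cy : Finset V := C.filter (fun v => ¬ z v = x) with hCy
    have hCsplit : Cx.card + Cy.card = C.card := by
      rw [hCx, hCy]; exact Finset.card_filter_add_card_filter_not _
    have hCxsub : Cx ⊆ sx := by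
      intro v hv
      rw [hCx, Finset.mem_filter] at hv
      exact (hsx_mem v).2 (hv.2 ▸ hreach v hv.1)
    have hCysub : Cy ⊆ sy := by
      intro v hv
      rw [hCy, Finset.mem_filter] at hv
      have hzy : z v = y := by
        rcases (hz v (hCD v hv.1)).1 with h | h
        · exact absurd h hv.2
        · exact h
      exact (hsy_mem v).2 (hzy ▸ hreach v hv.1)
    have hdisj : Disjoint ex ey := by
      rw [Finset.disjoint_left]
      intro e hxe hye
      obtain ⟨heH, u, hu, hux⟩ := (hex_mem e).1 hxe
      obtain ⟨_, u', hu', huy⟩ := (hey_mem e).1 hye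
      exfalso
      apply hr
      induction e with
      | _ a b =>
        have hab : H.Adj a b := (SimpleGraph.mem_edgeSet H).1 heH
        have hru : H.Reachable u u' := by
          rw [Sym2.mem_iff] at hu hu'
          rcases hu with rfl | rfl <;> rcases hu' with rfl | rfl
          · exact SimpleGraph.Reachable.refl _
          · exact hab.reachable
          · exact hab.symm.reachable
          · exact SimpleGraph.Reachable.refl _
        exact hux.symm.trans (hru.trans huy)
    have hcardsum : ex.card + ey.card ≤ Ek.card := by
      have hsub : ex ∪ ey ⊆ Ek := Finset.union_subset hexEk heyEk
      have := Finset.card_le_card hsub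
      rw [Finset.card_union_of_disjoint hdisj] at this
      exact this
    -- the key step: a nonempty Cx forces two extra vertices in sx
    have key : ∀ (t : V) (Ct : Finset V) (st : Finset V),
        (∀ u, u ∈ st ↔ H.Reachable u t) → Ct ⊆ st →
        (∀ v ∈ Ct, ¬ G.Adj v t ∧ v ≠ t) → Ct.Nonempty → Ct.card + 2 ≤ st.card := by
      intro t Ct st hst hsub hprop ⟨v₀, hv₀⟩
      have hv₀r : H.Reachable v₀ t := (hst v₀).1 (hsub hv₀)
      have hv₀t : v₀ ≠ t := (hprop v₀ hv₀).2
      obtain ⟨w⟩ := hv₀r.symm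
      obtain ⟨w₀, hadj, q, rfl⟩ := firstEdge w (fun h => hv₀t h.symm)
      have hw₀st : w₀ ∈ st := (hst w₀).2 (hadj.reachable.symm)
      have htst : t ∈ st := (hst t).2 (SimpleGraph.Reachable.refl t)
      have hw₀Ct : w₀ ∉ Ct := by
        intro h
        exact (hprop w₀ h).1 (hHG t w₀ hadj).symm
      have htCt : t ∉ Ct := fun h => (hprop t h).2 rfl
      have htw₀ : t ≠ w₀ := hadj.ne
      have hsub2 : insert t (insert w₀ Ct) ⊆ st := by
        intro v hv
        rw [Finset.mem_insert, Finset.mem_insert] at hv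
        rcases hv with rfl | rfl | hv
        · exact htst
        · exact hw₀st
        · exact hsub hv
      have := Finset.card_le_card hsub2
      rw [Finset.card_insert_of_notMem (by
            rw [Finset.mem_insert]; rintro (h | h); exact htw₀ h; exact htCt h),
          Finset.card_insert_of_notMem hw₀Ct] at this
      omega
    have hCxprop : ∀ v ∈ Cx, ¬ G.Adj v x ∧ v ≠ x := by
      intro v hv
      rw [hCx, Finset.mem_filter] at hv
      refine ⟨?_, (hDxy v (hCD v hv.1)).1⟩
      have := (hz v (hCD v hv.1)).2.1
      rwa [hv.2] at this
    have hCyprop : ∀ v ∈ Cy, ¬ G.Adj v y ∧ v ≠ y := by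
      intro v hv
      rw [hCy, Finset.mem_filter] at hv
      have hzy : z v = y := by
        rcases (hz v (hCD v hv.1)).1 with h | h
        · exact absurd h hv.2
        · exact h
      refine ⟨?_, (hDxy v (hCD v hv.1)).2⟩
      have := (hz v (hCD v hv.1)).2.1
      rwa [hzy] at this
    rcases Finset.eq_empty_or_nonempty Cx with hCxe | hCxne
    · rcases Finset.eq_empty_or_nonempty Cy with hCye | hCyne
      · rw [hCxe, hCye] at hCsplit
        simp only [Finset.card_empty] at hCsplit
        omega
      · have h1 := key y Cy sy hsy_mem hCysub hCyprop hCyne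
        have h2 := Finset.card_le_card heyEk
        rw [hCxe] at hCsplit
        simp only [Finset.card_empty] at hCsplit
        omega
    · rcases Finset.eq_empty_or_nonempty Cy with hCye | hCyne
      · have h1 := key x Cx sx hsx_mem hCxsub hCxprop hCxne
        have h2 := Finset.card_le_card hexEk
        rw [hCye] at hCsplit
        simp only [Finset.card_empty] at hCsplit
        omega
      · have h1 := key x Cx sx hsx_mem hCxsub hCxprop hCxne
        have h2 := key y Cy sy hsy_mem hCysub hCyprop hCyne
        omega

/-- The upper bound: any MC-coloring uses at most `m - n + 2` colors. -/
lemma upper_bound (G : SimpleGraph V) [DecidableRel G.Adj] (hG : G.Connected)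
    (hn : 3 < Fintype.card V) (htf : G.CliqueFree 3)
    (c : Sym2 V → ℕ) (hc : IsMCColoring G c) :
    (G.edgeFinset.image c).card + Fintype.card V ≤ G.edgeFinset.card + 2 := by
  classical
  -- find an edge x-y
  obtain ⟨u₀, v₀, huv⟩ := Fintype.exists_pair_of_one_lt_card (α := V) (by omega)
  obtain ⟨w⟩ := hG u₀ v₀
  obtain ⟨y, hxy, -, -⟩ := firstEdge w huv
  set x := u₀ with hx
  set D : Finset V := Finset.univ \ {x, y} with hD
  -- choose, for each v in D, a non-neighbor z v among x, y, together with a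
  -- monochromatic walk of color col v
  have hchoice : ∀ v : V, ∃ (zv : V) (kv : ℕ), v ∈ D →
      (zv = x ∨ zv = y) ∧ ¬ G.Adj v zv ∧
      ∃ p : G.Walk v zv, ∀ e ∈ p.edges, c e = kv := by
    intro v
    by_cases hv : v ∈ D
    · have hnboth : ¬ (G.Adj x v ∧ G.Adj y v) := by
        rintro ⟨h1, h2⟩
        exact htf {x, y, v} (SimpleGraph.is3Clique_triple_iff.2 ⟨hxy, h1, h2⟩)
      by_cases hvx : G.Adj v x
      · have hvy : ¬ G.Adj v y := fun h => hnboth ⟨hvx.symm, h.symm⟩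
        obtain ⟨p, _, k, hk⟩ := hc v y
        exact ⟨y, k, fun _ => ⟨Or.inr rfl, hvy, p, hk⟩⟩
      · obtain ⟨p, _, k, hk⟩ := hc v x
        exact ⟨x, k, fun _ => ⟨Or.inl rfl, hvx, p, hk⟩⟩
    · exact ⟨v, 0, fun h => absurd h hv⟩
  choose z col hz using hchoice
  set K : Finset ℕ := G.edgeFinset.image c with hK
  have hcolK : ∀ v ∈ D, col v ∈ K := by
    intro v hv
    obtain ⟨hor, hnadj, p, hp⟩ := hz v hv
    have hvne : v ≠ z v := by
      rw [hD, Finset.mem_sdiff, Finset.mem_insert, Finset.mem_singleton] at hv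
      push_neg at hv
      rcases hor with h | h <;> rw [h]
      · exact hv.2.1
      · exact hv.2.2
    obtain ⟨b, hadj, q, rfl⟩ := firstEdge p hvne
    have hfe : s(v, b) ∈ (SimpleGraph.Walk.cons hadj q).edges := by
      rw [SimpleGraph.Walk.edges_cons]; exact List.mem_cons_self
    rw [hK]
    exact Finset.mem_image.2 ⟨s(v, b), SimpleGraph.mem_edgeFinset.2
      ((SimpleGraph.mem_edgeSet G).2 hadj), hp _ hfe⟩
  have h1 : D.card = ∑ k ∈ K, (D.filter fun v => col v = k).card :=
    Finset.card_eq_sum_card_fiberwise hcolK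
  have h2 : G.edgeFinset.card = ∑ k ∈ K, (G.edgeFinset.filter fun e => c e = k).card :=
    Finset.card_eq_sum_card_fiberwise (fun e he => Finset.mem_image_of_mem c he)
  have h3 : ∀ k ∈ K, (D.filter fun v => col v = k).card + 1
      ≤ (G.edgeFinset.filter fun e => c e = k).card := by
    intro k hk
    obtain ⟨e, he, hce⟩ := Finset.mem_image.1 hk
    exact class_bound G c x y hxy D hD z col hz k ⟨e, he, hce⟩
  have h4 : ∑ k ∈ K, ((D.filter fun v => col v = k).card + 1)
      ≤ ∑ k ∈ K, (G.edgeFinset.filter fun e => c e = k).card :=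
    Finset.sum_le_sum h3
  rw [Finset.sum_add_distrib, Finset.sum_const, smul_eq_mul, mul_one] at h4
  have hDcard : D.card + 2 = Fintype.card V := by
    have hsub : ({x, y} : Finset V) ⊆ Finset.univ := Finset.subset_univ _
    have := Finset.card_sdiff_add_card_eq_card hsub
    rw [Finset.card_insert_of_notMem (by simp [hxy.ne]), Finset.card_singleton] at this
    rw [hD]
    simpa [Finset.card_univ] using this
  omega

end MCAux

/-- If `G` is a connected triangle-free graph with `n > 3` vertices,
then `mc(G) = m - n + 2`. -/
theorem mc_eq_of_triangle_free {V : Type*} [Fintype V] [DecidableEq V]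
    (G : SimpleGraph V) [DecidableRel G.Adj] (hG : G.Connected)
    (hn : 3 < Fintype.card V) (htf : G.CliqueFree 3) :
    (mcNum G : ℤ) = (G.edgeFinset.card : ℤ) - (Fintype.card V : ℤ) + 2 := by
  classical
  obtain ⟨N, hNmem, hNeq⟩ := MCAux.lower_bound G hG (by omega)
  have hub : ∀ b ∈ {k | ∃ c : Sym2 V → ℕ,
      IsMCColoring G c ∧ (Set.image c G.edgeSet).ncard = k}, b ≤ N := by
    rintro b ⟨c, hc, rfl⟩
    have h := MCAux.upper_bound G hG hn htf c hc
    have hcoe : Set.image c G.edgeSet = ↑(G.edgeFinset.image c) := by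
      rw [Finset.coe_image, SimpleGraph.coe_edgeFinset]
    rw [hcoe, Set.ncard_coe_finset]
    omega
  have hgr : IsGreatest {k | ∃ c : Sym2 V → ℕ,
      IsMCColoring G c ∧ (Set.image c G.edgeSet).ncard = k} N := ⟨hNmem, hub⟩
  have hmc : mcNum G = N := hgr.csSup_eq
  rw [hmc]
  omega
end

section
/- Let G be a connected simple graph with n > 3 vertices, m edges, and maximum degree Δ(G). If Δ(G) ≤ n − 2m/n, then mc(G) = m − n + 2. -/
open SimpleGraph Filter Real

set_option linter.unusedSectionVars false
set_option maxHeartbeats 1000000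

section MCAux

open Finset

variable {V : Type*} [Fintype V] [DecidableEq V]

noncomputable def compF (H : SimpleGraph V) (r : V) : Finset V :=
  (Set.toFinite {u | H.Reachable r u}).toFinset

lemma mem_compF {H : SimpleGraph V} {r u : V} : u ∈ compF H r ↔ H.Reachable r u := by
  simp [compF]

lemma self_mem_compF (H : SimpleGraph V) (r : V) : r ∈ compF H r :=
  mem_compF.2 (Reachable.refl r)

lemma compF_eq_of_mem {H : SimpleGraph V} {r u : V} (h : u ∈ compF H r) :
    compF H u = compF H r := by
  ext x
  rw [mem_compF, mem_compF]
  exact ⟨fun hx => (mem_compF.1 h).trans hx, fun hx => (mem_compF.1 h).symm.trans hx⟩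

lemma exists_parent (H : SimpleGraph V) (r v : V) (hv : v ∈ compF H r) (hne : v ≠ r) :
    ∃ u, H.Adj v u ∧ u ∈ compF H r ∧ H.dist r u + 1 = H.dist r v := by
  have hr : H.Reachable r v := mem_compF.1 hv
  obtain ⟨p, hp⟩ := hr.symm.exists_walk_length_eq_dist
  cases p with
  | nil => exact absurd rfl hne
  | @cons _ u _ h q =>
    refine ⟨u, h, mem_compF.2 (hr.trans ⟨h.toWalk⟩), ?_⟩
    have h1 : H.dist r u ≤ q.length := by
      have := H.dist_le q.reverse
      simpa [SimpleGraph.dist_comm] using this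
    obtain ⟨w, hw⟩ := (mem_compF.1 (mem_compF.2 (hr.trans ⟨h.toWalk⟩) :
        u ∈ compF H r)).exists_walk_length_eq_dist
    have h3 : H.dist r v ≤ H.dist r u + 1 := by
      have := H.dist_le (w.concat h.symm)
      rwa [SimpleGraph.Walk.length_concat, hw] at this
    have h4 : H.dist r v = q.length + 1 := by
      rw [SimpleGraph.dist_comm]
      simpa [SimpleGraph.Walk.length_cons] using hp.symm
    omega

noncomputable def parent (H : SimpleGraph V) (r v : V) : V :=
  if h : v ∈ compF H r ∧ v ≠ r then (exists_parent H r v h.1 h.2).choose else r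

lemma parent_spec {H : SimpleGraph V} {r v : V} (h1 : v ∈ compF H r) (h2 : v ≠ r) :
    H.Adj v (parent H r v) ∧ parent H r v ∈ compF H r ∧
      H.dist r (parent H r v) + 1 = H.dist r v := by
  rw [parent, dif_pos ⟨h1, h2⟩]
  exact (exists_parent H r v h1 h2).choose_spec

/-- The edges from each non-root vertex of the component to its parent. -/
noncomputable def treeEdges (H : SimpleGraph V) (r : V) : Finset (Sym2 V) :=
  ((compF H r).erase r).image (fun v => s(v, parent H r v))

lemma card_treeEdges (H : SimpleGraph V) (r : V) :
    (treeEdges H r).card = (compF H r).card - 1 := by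
  rw [treeEdges, Finset.card_image_of_injOn, card_erase_of_mem (self_mem_compF H r)]
  intro v1 h1 v2 h2 heq
  simp only [mem_coe, Finset.mem_erase] at h1 h2
  have s1 := parent_spec h1.2 h1.1
  have s2 := parent_spec h2.2 h2.1
  rw [Sym2.eq_iff] at heq
  rcases heq with ⟨rfl, -⟩ | ⟨h3, h4⟩
  · rfl
  · exfalso
    rw [← h3] at s2
    rw [h4] at s1
    omega

lemma treeEdges_mem {H : SimpleGraph V} {r : V} {e : Sym2 V} (he : e ∈ treeEdges H r) :
    ∃ x y, e = s(x, y) ∧ H.Adj x y ∧ x ∈ compF H r ∧ y ∈ compF H r := by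
  rw [treeEdges, Finset.mem_image] at he
  obtain ⟨v, hv, rfl⟩ := he
  rw [Finset.mem_erase] at hv
  have s := parent_spec hv.2 hv.1
  exact ⟨v, _, rfl, s.1, hv.2, s.2.1⟩

/-- Ordered adjacent pairs inside the component: two per tree edge. -/
noncomputable def ordPairs (H : SimpleGraph V) (r : V) : Finset (V × V) :=
  ((compF H r).erase r).image (fun v => (v, parent H r v)) ∪
    ((compF H r).erase r).image (fun v => (parent H r v, v))

lemma ordPairs_mem {H : SimpleGraph V} {r : V} {q : V × V} (hq : q ∈ ordPairs H r) :
    H.Adj q.1 q.2 ∧ q.1 ∈ compF H r ∧ q.2 ∈ compF H r := by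
  rw [ordPairs, Finset.mem_union, Finset.mem_image, Finset.mem_image] at hq
  rcases hq with ⟨v, hv, rfl⟩ | ⟨v, hv, rfl⟩ <;> rw [Finset.mem_erase] at hv <;>
    have s := parent_spec hv.2 hv.1
  · exact ⟨s.1, hv.2, s.2.1⟩
  · exact ⟨s.1.symm, s.2.1, hv.2⟩

lemma card_ordPairs (H : SimpleGraph V) (r : V) :
    (ordPairs H r).card = 2 * ((compF H r).card - 1) := by
  have hinj1 : Set.InjOn (fun v => (v, parent H r v)) ((compF H r).erase r) := by
    intro v1 _ v2 _ heq
    exact congrArg Prod.fst heq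
  have hinj2 : Set.InjOn (fun v => (parent H r v, v)) ((compF H r).erase r) := by
    intro v1 _ v2 _ heq
    exact congrArg Prod.snd heq
  have hdisj : Disjoint (((compF H r).erase r).image (fun v => (v, parent H r v)))
      (((compF H r).erase r).image (fun v => (parent H r v, v))) := by
    rw [Finset.disjoint_left]
    rintro q hq1 hq2
    rw [Finset.mem_image] at hq1 hq2
    obtain ⟨v1, hv1, he1⟩ := hq1
    obtain ⟨v2, hv2, he2⟩ := hq2
    rw [Finset.mem_erase] at hv1 hv2
    have s1 := parent_spec hv1.2 hv1.1
    have s2 := parent_spec hv2.2 hv2.1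
    have e1 : v1 = parent H r v2 := by rw [← he2] at he1; exact congrArg Prod.fst he1
    have e2 : parent H r v1 = v2 := by rw [← he2] at he1; exact congrArg Prod.snd he1
    rw [← e1] at s2
    rw [e2] at s1
    omega
  rw [ordPairs, Finset.card_union_of_disjoint hdisj,
    Finset.card_image_of_injOn hinj1, Finset.card_image_of_injOn hinj2,
    card_erase_of_mem (self_mem_compF H r)]
  ring


def colG (G : SimpleGraph V) (c : Sym2 V → ℕ) (k : ℕ) : SimpleGraph V where
  Adj u v := G.Adj u v ∧ c s(u, v) = k
  symm := ⟨fun u v h => ⟨h.1.symm, by rw [Sym2.eq_swap]; exact h.2⟩⟩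
  loopless := ⟨fun v h => G.irrefl h.1⟩

variable (G : SimpleGraph V) [DecidableRel G.Adj] (c : Sym2 V → ℕ)

/-- Nontrivial monochromatic components, with their color. -/
noncomputable def comps : Finset (ℕ × Finset V) :=
  (G.edgeFinset.image c).biUnion (fun k =>
    (Finset.univ.image (fun v => (k, compF (colG G c k) v))).filter (fun p => 2 ≤ p.2.card))

/-- fiber map from edges to components -/
noncomputable def fib (e : Sym2 V) : ℕ × Finset V :=
  (c e, compF (colG G c (c e)) e.out.1)

lemma colG_adj_out {e : Sym2 V} (he : e ∈ G.edgeFinset) :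
    (colG G c (c e)).Adj e.out.1 e.out.2 := by
  constructor
  · have : e ∈ G.edgeSet := by rwa [mem_edgeFinset] at he
    rw [← e.out_eq] at this
    exact this
  · rw [show s(e.out.1, e.out.2) = e from e.out_eq]

lemma fib_mem {e : Sym2 V} (he : e ∈ G.edgeFinset) : fib G c e ∈ comps G c := by
  rw [comps, Finset.mem_biUnion]
  refine ⟨c e, Finset.mem_image_of_mem c he, ?_⟩
  rw [Finset.mem_filter]
  constructor
  · exact Finset.mem_image.2 ⟨e.out.1, Finset.mem_univ _, rfl⟩
  · have hadj := colG_adj_out G c he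
    refine Finset.one_lt_card.2 ⟨e.out.1, self_mem_compF _ _, e.out.2,
      mem_compF.2 ⟨hadj.toWalk⟩, hadj.ne⟩

lemma card_eq_sum_fibers :
    G.edgeFinset.card = ∑ p ∈ comps G c, (G.edgeFinset.filter (fun e => fib G c e = p)).card :=
  Finset.card_eq_sum_card_fiberwise (fun _ he => fib_mem G c he)

lemma treeEdges_subset_fiber {p : ℕ × Finset V} (hp : p ∈ comps G c) :
    ∃ v₀, p.2 = compF (colG G c p.1) v₀ ∧
      treeEdges (colG G c p.1) v₀ ⊆ G.edgeFinset.filter (fun e => fib G c e = p) := by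
  rw [comps, Finset.mem_biUnion] at hp
  obtain ⟨k, hk, hp⟩ := hp
  rw [Finset.mem_filter, Finset.mem_image] at hp
  obtain ⟨⟨v₀, _, rfl⟩, hcard⟩ := hp
  refine ⟨v₀, rfl, ?_⟩
  intro e he
  obtain ⟨x, y, rfl, hadj, hx, hy⟩ := treeEdges_mem he
  rw [Finset.mem_filter]
  have hce : c s(x, y) = k := hadj.2
  constructor
  · rw [mem_edgeFinset]; exact hadj.1
  · rw [fib]
    have hout : s(x,y).out.1 ∈ compF (colG G c k) v₀ := by
      have hmem := Sym2.out_fst_mem s(x,y)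
      rw [Sym2.mem_iff] at hmem
      rcases hmem with h | h <;> rw [h] <;> assumption
    simp only [hce]
    exact Prod.ext rfl (compF_eq_of_mem hout)

lemma card_comp_le_fiber {p : ℕ × Finset V} (hp : p ∈ comps G c) :
    p.2.card - 1 ≤ (G.edgeFinset.filter (fun e => fib G c e = p)).card := by
  obtain ⟨v₀, hpe, hsub⟩ := treeEdges_subset_fiber G c hp
  calc p.2.card - 1 = (treeEdges (colG G c p.1) v₀).card := by
        rw [card_treeEdges, hpe]
      _ ≤ _ := Finset.card_le_card hsub

lemma two_le_card_comp {p : ℕ × Finset V} (hp : p ∈ comps G c) : 2 ≤ p.2.card := by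
  rw [comps, Finset.mem_biUnion] at hp
  obtain ⟨k, _, hp⟩ := hp
  exact (Finset.mem_filter.1 hp).2

lemma colors_card_le : (G.edgeFinset.image c).card ≤ (comps G c).card := by
  apply Finset.card_le_card_of_surjOn Prod.fst
  intro k hk
  rw [Finset.mem_coe, Finset.mem_image] at hk
  obtain ⟨e, he, rfl⟩ := hk
  exact ⟨fib G c e, Finset.mem_coe.2 (fib_mem G c he), rfl⟩

lemma waste_le :
    ∑ p ∈ comps G c, ((p.2.card : ℤ) - 2) ≤
      (G.edgeFinset.card : ℤ) - (G.edgeFinset.image c).card := by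
  have h1 : ∑ p ∈ comps G c, ((p.2.card : ℤ) - 1) ≤ (G.edgeFinset.card : ℤ) := by
    rw [card_eq_sum_fibers G c]
    push_cast
    apply Finset.sum_le_sum
    intro p hp
    have := card_comp_le_fiber G c hp
    have h2 := two_le_card_comp G c hp
    have : ((p.2.card - 1 : ℕ) : ℤ) ≤ ((G.edgeFinset.filter (fun e => fib G c e = p)).card : ℤ) := by
      exact_mod_cast this
    rw [Nat.cast_sub (by omega)] at this
    exact_mod_cast this
  have h2 : ((G.edgeFinset.image c).card : ℤ) ≤ (comps G c).card := by
    exact_mod_cast colors_card_le G c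
  have h3 : ∑ p ∈ comps G c, ((p.2.card : ℤ) - 2) =
      (∑ p ∈ comps G c, ((p.2.card : ℤ) - 1)) - (comps G c).card := by
    rw [Finset.sum_sub_distrib, Finset.sum_sub_distrib]
    simp
    ring
  rw [h3]
  linarith

lemma mem_comps_elim (G : SimpleGraph V) [DecidableRel G.Adj] (c : Sym2 V → ℕ)
    {p : ℕ × Finset V} (hp : p ∈ comps G c) :
    ∃ v₀, p.2 = compF (colG G c p.1) v₀ := by
  rw [comps, Finset.mem_biUnion] at hp
  obtain ⟨k, -, hp⟩ := hp
  rw [Finset.mem_filter, Finset.mem_image] at hp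
  obtain ⟨⟨v₀, -, rfl⟩, -⟩ := hp
  exact ⟨v₀, rfl⟩

lemma colG_edgeSet {k : ℕ} {e : Sym2 V} :
    e ∈ (colG G c k).edgeSet ↔ e ∈ G.edgeSet ∧ c e = k := by
  induction e with
  | _ x y => rfl

lemma cover_pair (hmc : IsMCColoring G c) {u v : V} (hne : u ≠ v) (hnadj : ¬ G.Adj u v) :
    ∃ p ∈ comps G c, 3 ≤ p.2.card ∧ u ∈ p.2 ∧ v ∈ p.2 := by
  obtain ⟨w, hwp, k, hk⟩ := hmc u v
  cases w with
  | nil => exact absurd rfl hne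
  | @cons _ x _ h w' =>
    have hux : u ≠ x := h.ne
    have hxv : x ≠ v := by
      rintro rfl
      exact hnadj h
    have hfirst : s(u, x) ∈ (Walk.cons h w').edges := by
      rw [Walk.edges_cons]
      exact List.mem_cons_self
    have hkfirst : c s(u, x) = k := hk _ hfirst
    have hcadj : (colG G c k).Adj u x := ⟨h, hkfirst⟩
    have htrans : ∀ e ∈ (Walk.cons h w').edges, e ∈ (colG G c k).edgeSet := by
      intro e he
      rw [colG_edgeSet]
      exact ⟨(Walk.cons h w').edges_subset_edgeSet he, hk e he⟩
    have hreach : (colG G c k).Reachable u v := ⟨(Walk.cons h w').transfer _ htrans⟩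
    refine ⟨(k, compF (colG G c k) u), ?_, ?_, self_mem_compF _ _, mem_compF.2 hreach⟩
    · rw [comps, Finset.mem_biUnion]
      refine ⟨k, ?_, ?_⟩
      · rw [Finset.mem_image]
        exact ⟨s(u, x), by rw [mem_edgeFinset]; exact h, hkfirst⟩
      · rw [Finset.mem_filter]
        refine ⟨Finset.mem_image.2 ⟨u, Finset.mem_univ _, rfl⟩, ?_⟩
        exact Finset.one_lt_card.2 ⟨u, self_mem_compF _ _, x, mem_compF.2 ⟨hcadj.toWalk⟩, hux⟩
    · have hsub : ({u, x, v} : Finset V) ⊆ compF (colG G c k) u := by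
        intro z hz
        simp only [Finset.mem_insert, Finset.mem_singleton] at hz
        rcases hz with rfl | rfl | rfl
        · exact self_mem_compF _ _
        · exact mem_compF.2 ⟨hcadj.toWalk⟩
        · exact mem_compF.2 hreach
      calc (3 : ℕ) = ({u, x, v} : Finset V).card := by
            rw [Finset.card_insert_of_notMem (by simp [hux, hne]),
              Finset.card_insert_of_notMem (by simp [hxv]), Finset.card_singleton]
          _ ≤ _ := Finset.card_le_card hsub

set_option maxHeartbeats 1000000 in
theorem mc_arith (n a y R P m : ℤ)
    (h1 : 4 ≤ n) (h2 : 3 ≤ a) (h3 : a + y + 1 ≤ n)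
    (h4 : 0 ≤ y) (h5 : R ≤ y) (h5' : 0 ≤ R)
    (h7 : n ≤ a + y + 2*R)
    (h9 : 4*m ≤ n^2)
    (h10 : (n - a)*(2*m - n) ≤ n*(P + 2*(y+R)))
    (h11 : n*(n-1) - 2*m ≤ (a-1)*(a-2) + P)
    (h12 : 0 ≤ P) (h13 : P ≤ y*(a-1)) (h14 : P ≤ y*(y-R+2)) : False := by
  rcases le_or_gt (2*a-3) n with hc | hc
  · nlinarith [sq_nonneg (n - 2*a + 3),
      mul_nonneg (by linarith : (0:ℤ) ≤ a - 1) (by linarith : (0:ℤ) ≤ n - 1 - a - y)]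
  · obtain ⟨b, rfl⟩ : ∃ b, a = n - b := ⟨n - a, by ring⟩
    have hb2 : 2 ≤ b := by omega
    have hyb : y ≤ b - 1 := by omega
    have hR1 : 1 ≤ R := by omega
    have hy1 : 1 ≤ y := by omega
    have hnb : 2*b + 4 ≤ n := by omega
    have hP' : P ≤ (b-1)*(y-R+2) := by nlinarith
    have hE1 : b*((2*b+1)*n - (b+1)*(b+2)) ≤ (n+b)*P + 2*n*(y+R) := by
      have h2m : (n*(n-2) - (n-b-1)*(n-b-2) - P) ≤ (2*m - n) := by linarith
      nlinarith [mul_le_mul_of_nonneg_left h2m (by linarith : (0:ℤ) ≤ b), h10]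
    have hX2 : (n+b)*P + 2*n*(y+R) ≤ (n+b)*((b-1)*(y-R+2)) + 2*n*(y+R) := by
      have : (n+b)*P ≤ (n+b)*((b-1)*(y-R+2)) :=
        mul_le_mul_of_nonneg_left hP' (by linarith)
      linarith
    have hX3 : (n+b)*((b-1)*(y-R+2)) + 2*n*(y+R) ≤
        (n+b)*((b-1)*(b+1-R)) + 2*n*(b-1+R) := by
      nlinarith [mul_nonneg (by linarith : (0:ℤ) ≤ b - 1 - y)
        (by nlinarith : (0:ℤ) ≤ (n+b)*(b-1) + 2*n)]
    rcases le_or_gt b 2 with hb | hb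
    · have hbe : b = 2 := by omega
      have hye : y = 1 := by omega
      have hRe : R = 1 := by omega
      subst hbe hye hRe
      nlinarith [hE1, hX2]
    · have hX4 : (n+b)*((b-1)*(b+1-R)) + 2*n*(b-1+R) ≤
          (n+b)*((b-1)*b) + 2*n*b := by
        nlinarith [mul_nonneg (by linarith : (0:ℤ) ≤ R - 1)
          (by nlinarith : (0:ℤ) ≤ (n+b)*(b-1) - 2*n)]
      nlinarith [hE1, hX2, hX3, hX4,
        mul_nonneg (by linarith : (0:ℤ) ≤ b) (by linarith : (0:ℤ) ≤ n - 2*b - 4)]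

theorem upper_bound (G : SimpleGraph V) [DecidableRel G.Adj] (hG : G.Connected)
    (hn : 3 < Fintype.card V)
    (hΔ : (G.maxDegree : ℝ) ≤
      (Fintype.card V : ℝ) - 2 * (G.edgeFinset.card : ℝ) / (Fintype.card V : ℝ))
    (c : Sym2 V → ℕ) (hmc : IsMCColoring G c) :
    ((G.edgeFinset.image c).card : ℤ) + Fintype.card V ≤ (G.edgeFinset.card : ℤ) + 2 := by
  by_contra hcon
  push_neg at hcon
  set n : ℤ := (Fintype.card V : ℤ) with hndef
  set m : ℤ := (G.edgeFinset.card : ℤ) with hmdef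
  set t : ℤ := ((G.edgeFinset.image c).card : ℤ) with htdef
  have h1 : 4 ≤ n := by rw [hndef]; exact_mod_cast hn
  have hnV : Nonempty V := Fintype.card_pos_iff.1 (by omega)
  -- m ≥ n - 1
  have hcompG : ∀ r : V, compF G r = Finset.univ := fun r =>
    Finset.eq_univ_iff_forall.2 (fun u => mem_compF.2 (hG.preconnected r u))
  have hnm : n - 1 ≤ m := by
    obtain ⟨r₀⟩ := hnV
    have hsub : treeEdges G r₀ ⊆ G.edgeFinset := by
      intro e he
      obtain ⟨x, y, rfl, hadj, -, -⟩ := treeEdges_mem he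
      rw [mem_edgeFinset]; exact hadj
    have hcard := card_treeEdges G r₀
    rw [hcompG r₀] at hcard
    have h2 := Finset.card_le_card hsub
    rw [hcard] at h2
    have h3 : 0 < Fintype.card V := by omega
    rw [hndef, hmdef]
    rw [Finset.card_univ] at h2
    omega
  -- degree bound
  have hdeg : ∀ v : V, n * (G.degree v : ℤ) ≤ n^2 - 2*m := by
    intro v
    have hnpos : (0:ℝ) < (Fintype.card V : ℝ) := by positivity
    have hr : (Fintype.card V : ℝ) * G.maxDegree ≤
        (Fintype.card V : ℝ)^2 - 2 * G.edgeFinset.card := by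
      have := mul_le_mul_of_nonneg_left hΔ hnpos.le
      calc (Fintype.card V : ℝ) * G.maxDegree ≤
          (Fintype.card V : ℝ) * ((Fintype.card V : ℝ) - 2 * G.edgeFinset.card / Fintype.card V) := this
        _ = (Fintype.card V : ℝ)^2 - 2 * G.edgeFinset.card := by
            field_simp
    have hd : (G.degree v : ℝ) ≤ (G.maxDegree : ℝ) := by
      exact_mod_cast G.degree_le_maxDegree v
    have : (Fintype.card V : ℝ) * G.degree v ≤
        (Fintype.card V : ℝ)^2 - 2 * G.edgeFinset.card :=
      le_trans (mul_le_mul_of_nonneg_left hd hnpos.le) hr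
    rw [hndef, hmdef]
    exact_mod_cast this
  -- non-neighbour sets
  set nn : V → Finset V := fun v => Finset.univ.filter (fun u => u ≠ v ∧ ¬ G.Adj v u)
    with hnndef
  have hnncard : ∀ v : V, ((nn v).card : ℤ) = n - 1 - G.degree v := by
    intro v
    have he : nn v = Finset.univ \ insert v (G.neighborFinset v) := by
      ext u
      simp only [hnndef, Finset.mem_filter, Finset.mem_univ, true_and, Finset.mem_sdiff,
        Finset.mem_insert, mem_neighborFinset]
      tauto
    have hvn : v ∉ G.neighborFinset v := by
      rw [mem_neighborFinset]; exact G.irrefl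
    have hcins : (insert v (G.neighborFinset v)).card = G.degree v + 1 := by
      rw [Finset.card_insert_of_notMem hvn, card_neighborFinset_eq_degree]
    have hle : (insert v (G.neighborFinset v)).card ≤ Fintype.card V :=
      le_trans (Finset.card_le_card (Finset.subset_univ _)) (by rw [Finset.card_univ])
    rw [he, Finset.card_sdiff_of_subset (Finset.subset_univ _), Finset.card_univ, hcins]
    rw [hcins] at hle
    rw [hndef]
    push_cast [Nat.cast_sub (by omega : G.degree v + 1 ≤ Fintype.card V)]
    ring
  have hnonadj : ∀ v : V, ∃ u, u ≠ v ∧ ¬ G.Adj v u := by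
    intro v
    have : (nn v).Nonempty := by
      rw [← Finset.card_pos]
      by_contra h'
      push_neg at h'
      have h0 : (nn v).card = 0 := by omega
      have := hnncard v
      rw [h0] at this
      push_cast at this
      have hdv := hdeg v
      have : (G.degree v : ℤ) = n - 1 := by linarith [this]
      nlinarith [hnm, h1, hdv]
    obtain ⟨u, hu⟩ := this
    rw [hnndef, Finset.mem_filter] at hu
    exact ⟨u, hu.2⟩
  -- big components
  set B : Finset (ℕ × Finset V) := (comps G c).filter (fun p => 3 ≤ p.2.card) with hBdef
  have hcoverp : ∀ u v : V, u ≠ v → ¬ G.Adj u v → ∃ p ∈ B, u ∈ p.2 ∧ v ∈ p.2 := by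
    intro u v hne hnadj
    obtain ⟨p, hp, h3c, hu, hv⟩ := cover_pair G c hmc hne hnadj
    exact ⟨p, Finset.mem_filter.2 ⟨hp, h3c⟩, hu, hv⟩
  have hcoverv : ∀ v : V, ∃ p ∈ B, v ∈ p.2 := by
    intro v
    obtain ⟨u, hu1, hu2⟩ := hnonadj v
    obtain ⟨p, hp, hv, _⟩ := hcoverp v u (Ne.symm hu1) (fun h => hu2 (h))
    exact ⟨p, hp, hv⟩
  have hBne : B.Nonempty := by
    obtain ⟨v⟩ := hnV
    obtain ⟨p, hp, -⟩ := hcoverv v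
    exact ⟨p, hp⟩
  obtain ⟨A, hA, hAmax⟩ := Finset.exists_max_image B (fun p => p.2.card) hBne
  set a : ℤ := (A.2.card : ℤ) with hadef
  have ha3 : 3 ≤ a := by
    rw [hadef]; exact_mod_cast (Finset.mem_filter.1 hA).2
  set F : Finset (ℕ × Finset V) := B.erase A with hFdef
  have hF3 : ∀ p ∈ F, 3 ≤ p.2.card := fun p hp =>
    (Finset.mem_filter.1 (Finset.mem_of_mem_erase hp)).2
  have hFle : ∀ p ∈ F, (p.2.card : ℤ) ≤ a := by
    intro p hp
    rw [hadef]
    exact_mod_cast hAmax p (Finset.mem_of_mem_erase hp)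
  set y : ℤ := ∑ p ∈ F, ((p.2.card : ℤ) - 2) with hydef
  set R : ℤ := (F.card : ℤ) with hRdef
  set P : ℤ := ∑ p ∈ F, ((p.2.card : ℤ) - 1) * ((p.2.card : ℤ) - 2) with hPdef
  have h4 : 0 ≤ y := Finset.sum_nonneg (fun p hp => by have := hF3 p hp; push_cast; omega)
  have h5' : 0 ≤ R := by rw [hRdef]; positivity
  have h5 : R ≤ y := by
    rw [hRdef, hydef]
    calc (F.card : ℤ) = ∑ _p ∈ F, (1:ℤ) := by rw [Finset.sum_const]; ring
      _ ≤ _ := Finset.sum_le_sum (fun p hp => by have := hF3 p hp; push_cast; omega)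
  have h12 : 0 ≤ P := Finset.sum_nonneg (fun p hp => by
    have := hF3 p hp
    have hk1 : (0:ℤ) ≤ (p.2.card : ℤ) - 1 := by push_cast; omega
    have hk2 : (0:ℤ) ≤ (p.2.card : ℤ) - 2 := by push_cast; omega
    positivity)
  have h13 : P ≤ y * (a - 1) := by
    rw [hPdef, hydef, Finset.sum_mul]
    apply Finset.sum_le_sum
    intro p hp
    have hc3 := hF3 p hp
    have hca := hFle p hp
    have h1' : ((p.2.card : ℤ) - 1) * ((p.2.card : ℤ) - 2) =
        ((p.2.card : ℤ) - 2) * ((p.2.card : ℤ) - 1) := by ring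
    rw [h1']
    apply mul_le_mul_of_nonneg_left (by omega) (by push_cast; omega)
  have h14 : P ≤ y * (y - R + 2) := by
    have hpt : ∀ p ∈ F, (p.2.card : ℤ) - 2 ≤ y - R + 1 := by
      intro p hp
      have hrest : (R - 1 : ℤ) ≤ y - ((p.2.card : ℤ) - 2) := by
        have hy' : y - ((p.2.card : ℤ) - 2) = ∑ q ∈ F.erase p, ((q.2.card : ℤ) - 2) := by
          rw [hydef]
          rw [← Finset.add_sum_erase F _ hp]
          ring
        rw [hy']
        have : ((F.erase p).card : ℤ) = R - 1 := by
          rw [hRdef, Finset.card_erase_of_mem hp]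
          have : 0 < F.card := Finset.card_pos.2 ⟨p, hp⟩
          push_cast [Nat.cast_sub (by omega : 1 ≤ F.card)]
          ring
        rw [← this]
        calc ((F.erase p).card : ℤ) = ∑ _q ∈ F.erase p, (1:ℤ) := by
              rw [Finset.sum_const]; ring
          _ ≤ _ := Finset.sum_le_sum (fun q hq => by
              have := hF3 q (Finset.mem_of_mem_erase hq); push_cast; omega)
      omega
    calc P ≤ ∑ p ∈ F, ((y - R + 2) * ((p.2.card : ℤ) - 2)) := by
          rw [hPdef]
          apply Finset.sum_le_sum
          intro p hp
          have h2' := hpt p hp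
          have h3' := hF3 p hp
          apply mul_le_mul_of_nonneg_right (by omega) (by push_cast; omega)
      _ = y * (y - R + 2) := by rw [← Finset.mul_sum, ← hydef]; ring
  -- waste: a + y + 1 ≤ n
  have h3 : a + y + 1 ≤ n := by
    have hsplit : ((A.2.card : ℤ) - 2) + y = ∑ p ∈ B, ((p.2.card : ℤ) - 2) := by
      rw [hydef, hFdef]
      exact Finset.add_sum_erase B (fun p => ((p.2.card : ℤ) - 2)) hA
    have hBsub : ∑ p ∈ B, ((p.2.card : ℤ) - 2) ≤ ∑ p ∈ comps G c, ((p.2.card : ℤ) - 2) := by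
      apply Finset.sum_le_sum_of_subset_of_nonneg (Finset.filter_subset _ _)
      intro p hp _
      have := two_le_card_comp G c hp
      push_cast; omega
    have hw := waste_le G c
    rw [← hmdef, ← htdef] at hw
    have : a - 2 + y ≤ n - 3 := by
      rw [hadef]
      calc (A.2.card : ℤ) - 2 + y = ∑ p ∈ B, ((p.2.card : ℤ) - 2) := hsplit
        _ ≤ ∑ p ∈ comps G c, ((p.2.card : ℤ) - 2) := hBsub
        _ ≤ m - t := hw
        _ ≤ n - 3 := by omega
    omega
  have h2 : 3 ≤ a := ha3
  -- vertex coverage : n ≤ a + y + 2R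
  have h7 : n ≤ a + y + 2*R := by
    have hsub : Finset.univ ⊆ B.biUnion (fun p => p.2) := by
      intro v _
      obtain ⟨p, hp, hv⟩ := hcoverv v
      exact Finset.mem_biUnion.2 ⟨p, hp, hv⟩
    have h1' : Fintype.card V ≤ ∑ p ∈ B, p.2.card := by
      calc Fintype.card V = (Finset.univ : Finset V).card := by rw [Finset.card_univ]
        _ ≤ (B.biUnion (fun p => p.2)).card := Finset.card_le_card hsub
        _ ≤ ∑ p ∈ B, p.2.card := Finset.card_biUnion_le
    have h2' : (∑ p ∈ B, (p.2.card : ℤ)) = a + (y + 2*R) := by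
      rw [← Finset.add_sum_erase B (fun p => (p.2.card : ℤ)) hA, ← hFdef, hadef]
      congr 1
      rw [hydef, hRdef]
      rw [Finset.sum_sub_distrib, Finset.sum_const]
      push_cast
      ring
    have : (n : ℤ) ≤ ∑ p ∈ B, (p.2.card : ℤ) := by
      rw [hndef]
      exact_mod_cast h1'
    omega
  -- handshake
  have hsum : ∑ v : V, (G.degree v : ℤ) = 2*m := by
    rw [hmdef]
    exact_mod_cast congrArg (Nat.cast : ℕ → ℤ) (G.sum_degrees_eq_twice_card_edges)
  -- h9 : 4m ≤ n²
  have h9 : 4*m ≤ n^2 := by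
    have h1' : n * (2*m) ≤ n * (n^2 - 2*m) := by
      calc n * (2*m) = ∑ v : V, n * (G.degree v : ℤ) := by
            rw [← Finset.mul_sum, hsum]
        _ ≤ ∑ _v : V, (n^2 - 2*m) := Finset.sum_le_sum (fun v _ => hdeg v)
        _ = n * (n^2 - 2*m) := by
            rw [Finset.sum_const, Finset.card_univ, hndef]; push_cast; ring
    nlinarith [h1]
  -- h10
  set sv : Finset V := Finset.univ \ A.2 with hsdef
  have haleN : A.2.card ≤ Fintype.card V := by
    calc A.2.card ≤ (Finset.univ : Finset V).card := Finset.card_le_card (Finset.subset_univ _)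
      _ = Fintype.card V := Finset.card_univ
  have hcards : (sv.card : ℤ) = n - a := by
    rw [hsdef, Finset.card_sdiff_of_subset (Finset.subset_univ _), Finset.card_univ, hndef, hadef]
    omega
  have hstep1 : ∀ v ∈ sv, ((nn v).card : ℤ) ≤
      ∑ p ∈ F, (if v ∈ p.2 then (p.2.card : ℤ) - 1 else 0) := by
    intro v hv
    have hvS : v ∉ A.2 := (Finset.mem_sdiff.1 hv).2
    have hsubnn : nn v ⊆ (F.filter (fun p => v ∈ p.2)).biUnion (fun p => p.2.erase v) := by
      intro u hu
      simp only [hnndef, Finset.mem_filter, Finset.mem_univ, true_and] at hu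
      obtain ⟨p, hp, hvp, hup⟩ := hcoverp v u (Ne.symm hu.1) hu.2
      have hpA : p ≠ A := by
        rintro rfl
        exact hvS hvp
      exact Finset.mem_biUnion.2 ⟨p,
        Finset.mem_filter.2 ⟨Finset.mem_erase.2 ⟨hpA, hp⟩, hvp⟩,
        Finset.mem_erase.2 ⟨hu.1, hup⟩⟩
    have hcard1 : (nn v).card ≤ ∑ p ∈ F.filter (fun p => v ∈ p.2), (p.2.erase v).card :=
      le_trans (Finset.card_le_card hsubnn) Finset.card_biUnion_le
    calc ((nn v).card : ℤ)
        ≤ ∑ p ∈ F.filter (fun p => v ∈ p.2), ((p.2.erase v).card : ℤ) := by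
          exact_mod_cast hcard1
      _ = ∑ p ∈ F.filter (fun p => v ∈ p.2), ((p.2.card : ℤ) - 1) := by
          apply Finset.sum_congr rfl
          intro p hp
          rw [Finset.card_erase_of_mem (Finset.mem_filter.1 hp).2]
          have := hF3 p (Finset.mem_filter.1 hp).1
          omega
      _ = ∑ p ∈ F, (if v ∈ p.2 then (p.2.card : ℤ) - 1 else 0) :=
          Finset.sum_filter _ _
  have hstep2 : ∑ v ∈ sv, ((nn v).card : ℤ) ≤
      ∑ p ∈ F, (p.2.card : ℤ) * ((p.2.card : ℤ) - 1) := by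
    calc ∑ v ∈ sv, ((nn v).card : ℤ)
        ≤ ∑ v ∈ sv, ∑ p ∈ F, (if v ∈ p.2 then (p.2.card : ℤ) - 1 else 0) :=
          Finset.sum_le_sum hstep1
      _ = ∑ p ∈ F, ∑ v ∈ sv, (if v ∈ p.2 then (p.2.card : ℤ) - 1 else 0) := Finset.sum_comm
      _ ≤ _ := by
          apply Finset.sum_le_sum
          intro p hp
          have h3c := hF3 p hp
          calc ∑ v ∈ sv, (if v ∈ p.2 then (p.2.card : ℤ) - 1 else 0)
              = ∑ v ∈ sv.filter (fun v => v ∈ p.2), ((p.2.card : ℤ) - 1) :=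
                (Finset.sum_filter _ _).symm
            _ = ((sv.filter (fun v => v ∈ p.2)).card : ℤ) * ((p.2.card : ℤ) - 1) := by
                rw [Finset.sum_const]
                push_cast
                ring
            _ ≤ (p.2.card : ℤ) * ((p.2.card : ℤ) - 1) := by
                have hsub2 : sv.filter (fun v => v ∈ p.2) ⊆ p.2 :=
                  fun x hx => (Finset.mem_filter.1 hx).2
                have h1c : ((sv.filter (fun v => v ∈ p.2)).card : ℤ) ≤ (p.2.card : ℤ) := by
                  exact_mod_cast Finset.card_le_card hsub2
                apply mul_le_mul_of_nonneg_right h1c (by push_cast; omega)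
  have hTsum : ∑ p ∈ F, (p.2.card : ℤ) * ((p.2.card : ℤ) - 1) = P + 2*(y + R) := by
    have hpt : ∀ p ∈ F, (p.2.card : ℤ) * ((p.2.card : ℤ) - 1) =
        ((p.2.card : ℤ) - 1) * ((p.2.card : ℤ) - 2) + (2*((p.2.card : ℤ) - 2) + 2) := by
      intro p _
      ring
    rw [Finset.sum_congr rfl hpt, Finset.sum_add_distrib, Finset.sum_add_distrib,
      Finset.sum_const, ← Finset.mul_sum, ← hPdef, ← hydef]
    rw [hRdef]
    push_cast
    ring
  have h10 : (n - a)*(2*m - n) ≤ n*(P + 2*(y+R)) := by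
    have hlhs : ∀ v ∈ sv, 2*m - n ≤ n * ((nn v).card : ℤ) := by
      intro v _
      have hc := hnncard v
      have hd := hdeg v
      nlinarith [hc, hd]
    calc (n - a)*(2*m - n) = (sv.card : ℤ) * (2*m - n) := by rw [hcards]
      _ = ∑ _v ∈ sv, (2*m - n) := by rw [Finset.sum_const]; push_cast; ring
      _ ≤ ∑ v ∈ sv, n * ((nn v).card : ℤ) := Finset.sum_le_sum hlhs
      _ = n * ∑ v ∈ sv, ((nn v).card : ℤ) := by rw [Finset.mul_sum]
      _ ≤ n * ∑ p ∈ F, (p.2.card : ℤ) * ((p.2.card : ℤ) - 1) :=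
          mul_le_mul_of_nonneg_left hstep2 (by omega)
      _ = n*(P + 2*(y+R)) := by rw [hTsum]
  -- h11
  have hsumnn : ∑ v : V, ((nn v).card : ℤ) = n*(n-1) - 2*m := by
    calc ∑ v : V, ((nn v).card : ℤ) = ∑ v : V, (n - 1 - (G.degree v : ℤ)) :=
          Finset.sum_congr rfl (fun v _ => hnncard v)
      _ = (Fintype.card V : ℤ)*(n-1) - ∑ v : V, (G.degree v : ℤ) := by
          rw [Finset.sum_sub_distrib, Finset.sum_const, Finset.card_univ]
          push_cast
          ring
      _ = n*(n-1) - 2*m := by rw [hsum, ← hndef]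
  set D : Finset (V × V) :=
    Finset.univ.filter (fun q : V × V => q.1 ≠ q.2 ∧ ¬ G.Adj q.1 q.2) with hDdef
  have hmem_nn : ∀ w u : V, u ∈ nn w ↔ u ≠ w ∧ ¬ G.Adj w u := by
    intro w u
    rw [hnndef]
    simp only [Finset.mem_filter, Finset.mem_univ, true_and]
  have hDcard : D.card = ∑ v : V, (nn v).card := by
    rw [hDdef, Finset.card_eq_sum_card_fiberwise
      (f := Prod.fst) (t := Finset.univ) (fun q _ => Finset.mem_univ q.1)]
    apply Finset.sum_congr rfl
    intro v _
    refine Finset.card_bij' (i := fun q _ => q.2) (j := fun u _ => (v, u))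
      ?_ ?_ ?_ ?_
    · intro q hq
      simp only [Finset.mem_filter, Finset.mem_univ, true_and] at hq
      obtain ⟨⟨hne, hnadj⟩, hfst⟩ := hq
      rw [hmem_nn]
      subst hfst
      exact ⟨Ne.symm hne, hnadj⟩
    · intro u hu
      rw [hmem_nn] at hu
      simp only [Finset.mem_filter, Finset.mem_univ, true_and]
      exact ⟨⟨Ne.symm hu.1, hu.2⟩, trivial⟩
    · intro q hq
      simp only [Finset.mem_filter, Finset.mem_univ, true_and] at hq
      exact Prod.ext hq.2.symm rfl
    · intro u hu
      rfl
  have hDsub : D ⊆ B.biUnion (fun p => p.2.offDiag.filter (fun q => ¬ G.Adj q.1 q.2)) := by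
    intro q hq
    rw [hDdef, Finset.mem_filter] at hq
    obtain ⟨p, hp, h1q, h2q⟩ := hcoverp q.1 q.2 hq.2.1 hq.2.2
    exact Finset.mem_biUnion.2 ⟨p, hp,
      Finset.mem_filter.2 ⟨Finset.mem_offDiag.2 ⟨h1q, h2q, hq.2.1⟩, hq.2.2⟩⟩
  have hperp : ∀ p ∈ B, ((p.2.offDiag.filter (fun q => ¬ G.Adj q.1 q.2)).card : ℤ) ≤
      ((p.2.card : ℤ) - 1)*((p.2.card : ℤ) - 2) := by
    intro p hp
    have hpc : p ∈ comps G c := (Finset.mem_filter.1 hp).1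
    obtain ⟨v₀, hpe⟩ := mem_comps_elim G c hpc
    have hOsub : ordPairs (colG G c p.1) v₀ ⊆
        p.2.offDiag.filter (fun q => G.Adj q.1 q.2) := by
      intro q hq
      obtain ⟨hadj, h1q, h2q⟩ := ordPairs_mem hq
      rw [Finset.mem_filter, Finset.mem_offDiag]
      exact ⟨⟨by rw [hpe]; exact h1q, by rw [hpe]; exact h2q, hadj.ne⟩, hadj.1⟩
    have hdisj : Disjoint (p.2.offDiag.filter (fun q => ¬ G.Adj q.1 q.2))
        (ordPairs (colG G c p.1) v₀) := by
      rw [Finset.disjoint_left]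
      intro q h1q h2q
      exact (Finset.mem_filter.1 h1q).2 ((Finset.mem_filter.1 (hOsub h2q)).2)
    have hunion : (p.2.offDiag.filter (fun q => ¬ G.Adj q.1 q.2)) ∪
        ordPairs (colG G c p.1) v₀ ⊆ p.2.offDiag := by
      intro q hq
      rcases Finset.mem_union.1 hq with h | h
      · exact Finset.mem_of_mem_filter _ h
      · exact Finset.mem_of_mem_filter _ (hOsub h)
    have hcount := Finset.card_le_card hunion
    rw [Finset.card_union_of_disjoint hdisj, card_ordPairs, ← hpe,
      Finset.offDiag_card] at hcount
    have h3c : 3 ≤ p.2.card := (Finset.mem_filter.1 hp).2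
    have hkk : p.2.card ≤ p.2.card * p.2.card := Nat.le_mul_of_pos_left _ (by omega)
    zify [show 1 ≤ p.2.card by omega, hkk] at hcount
    nlinarith [hcount]
  have h11 : n*(n-1) - 2*m ≤ (a-1)*(a-2) + P := by
    have hc1 : (D.card : ℤ) ≤
        ∑ p ∈ B, ((p.2.offDiag.filter (fun q => ¬ G.Adj q.1 q.2)).card : ℤ) := by
      have := le_trans (Finset.card_le_card hDsub) Finset.card_biUnion_le
      exact_mod_cast this
    calc n*(n-1) - 2*m = ∑ v : V, ((nn v).card : ℤ) := hsumnn.symm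
      _ = (D.card : ℤ) := by exact_mod_cast hDcard.symm
      _ ≤ ∑ p ∈ B, ((p.2.offDiag.filter (fun q => ¬ G.Adj q.1 q.2)).card : ℤ) := hc1
      _ ≤ ∑ p ∈ B, ((p.2.card : ℤ) - 1)*((p.2.card : ℤ) - 2) := Finset.sum_le_sum hperp
      _ = (a-1)*(a-2) + P := by
          rw [← Finset.add_sum_erase B
            (fun p => ((p.2.card : ℤ) - 1)*((p.2.card : ℤ) - 2)) hA, ← hFdef, ← hPdef, hadef]
  exact mc_arith n a y R P m h1 h2 h3 h4 h5 h5' h7 h9 h10 h11 h12 h13 h14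

theorem lower_bound (G : SimpleGraph V) [DecidableRel G.Adj] (hG : G.Connected)
    (hn : 3 < Fintype.card V) :
    ∃ c : Sym2 V → ℕ, IsMCColoring G c ∧
      (G.edgeFinset.image c).card + Fintype.card V = G.edgeFinset.card + 2 := by
  have hnV : Nonempty V := Fintype.card_pos_iff.1 (by omega)
  obtain ⟨r⟩ := hnV
  have hcomp : compF G r = Finset.univ :=
    Finset.eq_univ_iff_forall.2 (fun u => mem_compF.2 (hG.preconnected r u))
  set T : Finset (Sym2 V) := treeEdges G r with hTdef
  have hTsub : T ⊆ G.edgeFinset := by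
    intro e he
    obtain ⟨x, y, rfl, hadj, -, -⟩ := treeEdges_mem he
    rw [mem_edgeFinset]; exact hadj
  have hTcard : T.card = Fintype.card V - 1 := by
    rw [hTdef, card_treeEdges, hcomp, Finset.card_univ]
  set ι : Sym2 V → ℕ := fun e => ((Fintype.equivFin (Sym2 V)) e : ℕ) with hidef
  classical
  set c : Sym2 V → ℕ := fun e => if e ∈ T then 0 else ι e + 1 with hcdef
  set G₀ : SimpleGraph V := SimpleGraph.fromEdgeSet (T : Set (Sym2 V)) with hG₀def
  have hle : G₀ ≤ G := by
    intro u v h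
    rw [hG₀def, fromEdgeSet_adj] at h
    have := hTsub (Finset.mem_coe.1 h.1)
    rw [mem_edgeFinset, mem_edgeSet] at this
    exact this
  have hreach : ∀ v, G₀.Reachable r v := by
    have key : ∀ d : ℕ, ∀ v : V, G.dist r v = d → G₀.Reachable r v := by
      intro d
      induction d using Nat.strong_induction_on with
      | _ d ih =>
        intro v hd
        by_cases hv : v = r
        · subst hv; exact Reachable.refl _
        · have hvc : v ∈ compF G r := by rw [hcomp]; exact Finset.mem_univ v
          have hs := parent_spec hvc hv
          have hadj₀ : G₀.Adj v (parent G r v) := by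
            rw [hG₀def, fromEdgeSet_adj]
            refine ⟨?_, hs.1.ne⟩
            rw [hTdef, treeEdges]
            exact Finset.mem_coe.2
              (Finset.mem_image_of_mem _ (Finset.mem_erase.2 ⟨hv, hvc⟩))
          have hd1 : G.dist r (parent G r v) < d := by omega
          exact (ih _ hd1 _ rfl).trans ⟨hadj₀.symm.toWalk⟩
    exact fun v => key (G.dist r v) v rfl
  have hhom : ∀ x : V, (SimpleGraph.Hom.ofLE hle) x = x := fun x => rfl
  have hinj : Function.Injective (SimpleGraph.Hom.ofLE hle) := by
    intro x y h
    rw [hhom, hhom] at h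
    exact h
  refine ⟨c, ?_, ?_⟩
  · intro u v
    have hr : G₀.Reachable u v := (hreach u).symm.trans (hreach v)
    obtain ⟨w⟩ := hr
    refine ⟨(w.toPath : G₀.Walk u v).map (SimpleGraph.Hom.ofLE hle),
      Walk.map_isPath_of_injective hinj (w.toPath).2, 0, ?_⟩
    intro e he
    rw [Walk.edges_map] at he
    obtain ⟨e', he', rfl⟩ := List.mem_map.1 he
    have h1 : e' ∈ G₀.edgeSet := Walk.edges_subset_edgeSet _ he'
    have h2 : Sym2.map (SimpleGraph.Hom.ofLE hle) e' = e' := by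
      have hfn : ⇑(SimpleGraph.Hom.ofLE hle) = id := funext hhom
      rw [hfn, Sym2.map_id, id]
    rw [h2]
    rw [hG₀def, edgeSet_fromEdgeSet] at h1
    have h3 : e' ∈ T := Finset.mem_coe.1 h1.1
    rw [hcdef]
    simp [h3]
  · have hTne : T.Nonempty := by
      rw [← Finset.card_pos, hTcard]; omega
    have himgT : T.image c = {0} := by
      ext x
      simp only [Finset.mem_image, Finset.mem_singleton]
      constructor
      · rintro ⟨e, he, rfl⟩
        rw [hcdef]; simp [he]
      · rintro rfl
        obtain ⟨e, he⟩ := hTne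
        exact ⟨e, he, by rw [hcdef]; simp [he]⟩
    have hunion : T ∪ (G.edgeFinset \ T) = G.edgeFinset :=
      Finset.union_sdiff_of_subset hTsub
    have himg : G.edgeFinset.image c = {0} ∪ (G.edgeFinset \ T).image c := by
      conv_lhs => rw [← hunion]
      rw [Finset.image_union, himgT]
    have hinj2 : Set.InjOn c ((G.edgeFinset \ T) : Finset (Sym2 V)) := by
      intro e1 h1 e2 h2 he
      rw [Finset.mem_coe, Finset.mem_sdiff] at h1 h2
      rw [hcdef] at he
      simp only [if_neg h1.2, if_neg h2.2] at he
      have hii : ι e1 = ι e2 := by omega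
      rw [hidef] at hii
      exact (Fintype.equivFin (Sym2 V)).injective (Fin.val_injective hii)
    have hcard2 : ((G.edgeFinset \ T).image c).card =
        G.edgeFinset.card - (Fintype.card V - 1) := by
      rw [Finset.card_image_of_injOn hinj2, Finset.card_sdiff_of_subset hTsub, hTcard]
    have h0not : (0 : ℕ) ∉ (G.edgeFinset \ T).image c := by
      rw [Finset.mem_image]
      rintro ⟨e, he, h0⟩
      rw [Finset.mem_sdiff] at he
      rw [hcdef] at h0
      simp [he.2] at h0
    have hdisj : Disjoint ({0} : Finset ℕ) ((G.edgeFinset \ T).image c) := by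
      rw [Finset.disjoint_left]
      intro x hx
      rw [Finset.mem_singleton] at hx
      subst hx
      exact fun h => h0not h
    have hm : Fintype.card V - 1 ≤ G.edgeFinset.card := by
      have := Finset.card_le_card hTsub
      omega
    rw [himg, Finset.card_union_of_disjoint hdisj, Finset.card_singleton, hcard2]
    omega

end MCAux

/-- If `G` is a connected graph with `n > 3` vertices, `m` edges and maximum
degree `Δ(G) ≤ n - 2m/n`, then `mc(G) = m - n + 2`. -/
theorem mc_eq_of_maxDegree_le {V : Type*} [Fintype V] [DecidableEq V]
    (G : SimpleGraph V) [DecidableRel G.Adj] (hG : G.Connected)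
    (hn : 3 < Fintype.card V)
    (hΔ : (G.maxDegree : ℝ) ≤
      (Fintype.card V : ℝ) - 2 * (G.edgeFinset.card : ℝ) / (Fintype.card V : ℝ)) :
    (mcNum G : ℤ) = (G.edgeFinset.card : ℤ) - (Fintype.card V : ℤ) + 2 := by
  obtain ⟨c₀, hc₀, hcard₀⟩ := lower_bound G hG hn
  have hset : ∀ c : Sym2 V → ℕ,
      (Set.image c G.edgeSet).ncard = (G.edgeFinset.image c).card := by
    intro c
    rw [← coe_edgeFinset, ← Finset.coe_image, Set.ncard_coe_finset]
  have hmemS : (G.edgeFinset.card + 2 - Fintype.card V) ∈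
      {k | ∃ c : Sym2 V → ℕ, IsMCColoring G c ∧ (Set.image c G.edgeSet).ncard = k} :=
    ⟨c₀, hc₀, by rw [hset]; omega⟩
  have hub : ∀ k ∈ {k | ∃ c : Sym2 V → ℕ, IsMCColoring G c ∧
      (Set.image c G.edgeSet).ncard = k}, k ≤ G.edgeFinset.card + 2 - Fintype.card V := by
    rintro k ⟨c, hc, rfl⟩
    have := upper_bound G hG hn hΔ c hc
    rw [hset]
    omega
  have hmc : mcNum G = G.edgeFinset.card + 2 - Fintype.card V :=
    le_antisymm (csSup_le ⟨_, hmemS⟩ hub) (le_csSup ⟨_, hub⟩ hmemS)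
  rw [hmc]
  have hn2 : Fintype.card V ≤ G.edgeFinset.card + 2 := by omega
  push_cast [Nat.cast_sub hn2]
  ring
end

section
/- For every connected simple graph G with n vertices and m edges, mc(G) ≤ m − n + χ(G), where χ(G) is the vertex chromatic number of G. -/
open SimpleGraph Filter Real

section MCAux
open Finset
open scoped Classical

/-- The number of connected components of a graph on a finite vertex type. -/
noncomputable def nccAux {V : Type*} [Fintype V] (H : SimpleGraph V) : ℕ :=
  (Finset.univ.image H.connectedComponentMk).card

lemma reach_cases {V : Type*} {H H' : SimpleGraph V} {u v x y : V}
    (hle : ∀ a b, H.Adj a b → H'.Adj a b ∨ s(a, b) = s(u, v))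
    (w : H.Walk x y) :
    H'.Reachable x y ∨ (H'.Reachable x u ∧ H'.Reachable v y) ∨
      (H'.Reachable x v ∧ H'.Reachable u y) := by
  induction w with
  | nil => exact Or.inl (Reachable.refl _)
  | @cons x z y h q ih =>
    rcases hle _ _ h with h' | he
    · have rxz : H'.Reachable x z := h'.reachable
      rcases ih with r | ⟨r1, r2⟩ | ⟨r1, r2⟩
      · exact Or.inl (rxz.trans r)
      · exact Or.inr (Or.inl ⟨rxz.trans r1, r2⟩)
      · exact Or.inr (Or.inr ⟨rxz.trans r1, r2⟩)
    · rw [Sym2.eq_iff] at he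
      rcases he with ⟨rfl, rfl⟩ | ⟨rfl, rfl⟩
      · rcases ih with r | ⟨r1, r2⟩ | ⟨r1, r2⟩
        · exact Or.inr (Or.inl ⟨Reachable.refl _, r⟩)
        · exact Or.inr (Or.inl ⟨Reachable.refl _, r2⟩)
        · exact Or.inl r2
      · rcases ih with r | ⟨r1, r2⟩ | ⟨r1, r2⟩
        · exact Or.inr (Or.inr ⟨Reachable.refl _, r⟩)
        · exact Or.inl r2
        · exact Or.inr (Or.inr ⟨Reachable.refl _, r2⟩)

lemma ncc_deleteEdge_le {V : Type*} [Fintype V] (H : SimpleGraph V) (u v : V) :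
    nccAux (H.deleteEdges {s(u, v)}) ≤ nccAux H + 1 := by
  set H' := H.deleteEdges {s(u, v)} with hH'
  have hle' : H' ≤ H := deleteEdges_le _
  have hle : ∀ a b : V, H.Adj a b → H'.Adj a b ∨ s(a, b) = s(u, v) := by
    intro a b hab
    by_cases hm : s(a, b) = s(u, v)
    · exact Or.inr hm
    · exact Or.inl (by rw [hH', deleteEdges_adj]; exact ⟨hab, by simpa using hm⟩)
  set θ : V → H.ConnectedComponent × Bool :=
    fun x => (H.connectedComponentMk x, decide (H'.Reachable x u)) with hθ
  have hconst : ∀ a b : V, H'.Reachable a b → θ a = θ b := by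
    intro a b r
    refine Prod.ext (ConnectedComponent.sound (r.mono hle')) ?_
    show decide (H'.Reachable a u) = decide (H'.Reachable b u)
    simp only [decide_eq_decide]
    exact ⟨fun h => (r.symm.trans h), fun h => r.trans h⟩
  set φ : H'.ConnectedComponent → H.ConnectedComponent × Bool :=
    ConnectedComponent.lift θ (fun a b p _ => hconst a b ⟨p⟩) with hφ
  have hkey : ∀ x y : V, φ (H'.connectedComponentMk x) = φ (H'.connectedComponentMk y) →
      H'.Reachable x y := by
    intro x y hxy
    rw [hφ] at hxy
    simp only [ConnectedComponent.lift_mk, hθ, Prod.mk.injEq, decide_eq_decide] at hxy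
    obtain ⟨hc, hiff⟩ := hxy
    obtain ⟨w⟩ := ConnectedComponent.exact hc
    rcases reach_cases hle w with r | ⟨r1, r2⟩ | ⟨r1, r2⟩
    · exact r
    · exact (r1.trans (hiff.mp r1).symm)
    · exact ((hiff.mpr r2.symm).trans r2)
  -- counting
  have hsub : (Finset.univ.image H'.connectedComponentMk).image φ ⊆
      (Finset.univ.image H.connectedComponentMk) ×ˢ {false} ∪ {(H.connectedComponentMk u, true)} := by
    intro p hp
    simp only [Finset.mem_image, Finset.mem_union, Finset.mem_product, Finset.mem_singleton] at hp ⊢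
    obtain ⟨C, ⟨x, _, rfl⟩, rfl⟩ := hp
    by_cases hr : H'.Reachable x u
    · right
      have : H.connectedComponentMk x = H.connectedComponentMk u :=
        ConnectedComponent.sound (hr.mono hle')
      simp [hφ, hθ, hr, this]
    · left
      simp [hφ, hθ, hr]
      exact ⟨x, Reachable.refl x⟩
  have hinj : Set.InjOn φ (Finset.univ.image H'.connectedComponentMk : Finset _) := by
    intro C hC D hD hCD
    simp only [Finset.coe_image, Set.mem_image, Finset.coe_univ, Set.image_univ] at hC hD
    obtain ⟨x, rfl⟩ := hC
    obtain ⟨y, rfl⟩ := hD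
    exact ConnectedComponent.sound (hkey x y hCD)
  calc nccAux H' = ((Finset.univ.image H'.connectedComponentMk).image φ).card :=
        (Finset.card_image_of_injOn hinj).symm
    _ ≤ ((Finset.univ.image H.connectedComponentMk) ×ˢ {false} ∪
          {(H.connectedComponentMk u, true)}).card := Finset.card_le_card hsub
    _ ≤ nccAux H + 1 := by
        refine le_trans (Finset.card_union_le _ _) ?_
        simp [nccAux]

lemma card_le_ncard_edgeSet_add_ncc {V : Type*} [Fintype V] (H : SimpleGraph V) :
    Fintype.card V ≤ H.edgeSet.ncard + nccAux H := by
  generalize hn : H.edgeSet.ncard = n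
  induction n generalizing H with
  | zero =>
    have : H.edgeSet = ∅ := (Set.ncard_eq_zero H.edgeSet.toFinite).mp hn
    have hbot : H = ⊥ := edgeSet_eq_empty.mp this
    subst hbot
    have hinj : Function.Injective (⊥ : SimpleGraph V).connectedComponentMk := by
      intro a b hab
      exact reachable_bot.mp (ConnectedComponent.exact hab)
    simp [nccAux, Finset.card_image_of_injective _ hinj]
  | succ n ih =>
    have hne : H.edgeSet.Nonempty := by
      rw [Set.nonempty_iff_ne_empty]
      intro h
      rw [h] at hn; simp at hn
    obtain ⟨e, he⟩ := hne
    induction e with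
    | h u v =>
      have hadj : H.Adj u v := (mem_edgeSet H).mp he
      set H' := H.deleteEdges {s(u, v)} with hH'
      have hE : H'.edgeSet = H.edgeSet \ {s(u, v)} := edgeSet_deleteEdges _
      have hcard : H'.edgeSet.ncard = n := by
        rw [hE, Set.ncard_diff_singleton_of_mem he, hn]; omega
      have h1 := ih H' hcard
      have h2 := ncc_deleteEdge_le H u v
      rw [← hH'] at h2
      omega

lemma ncc_lt_classes {V : Type*} [Fintype V] {α : Type*} (f : V → α) (H : SimpleGraph V)
    {u v : V} (huv : H.Adj u v) (hf : f u ≠ f v) :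
    nccAux H + 1 ≤ (Finset.univ.image fun x => (f x, H.connectedComponentMk x)).card := by
  set g : V → α × H.ConnectedComponent := fun x => (f x, H.connectedComponentMk x) with hg
  set t : Finset (α × H.ConnectedComponent) := Finset.univ.image g with ht
  have hgu : g u ∈ t := Finset.mem_image_of_mem g (Finset.mem_univ u)
  have hgv : g v ∈ t := Finset.mem_image_of_mem g (Finset.mem_univ v)
  have hne : g u ≠ g v := by
    intro h
    exact hf (congrArg Prod.fst h)
  have hsnd : (g u).2 = (g v).2 := ConnectedComponent.sound huv.reachable
  have himg : Finset.univ.image H.connectedComponentMk = t.image Prod.snd := by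
    rw [ht, Finset.image_image]
    rfl
  have hsub : t.image Prod.snd ⊆ (t.erase (g u)).image Prod.snd := by
    intro b hb
    obtain ⟨x, hx, rfl⟩ := Finset.mem_image.mp hb
    by_cases hxu : x = g u
    · subst hxu
      refine Finset.mem_image.mpr ⟨g v, Finset.mem_erase.mpr ⟨hne.symm, hgv⟩, hsnd.symm⟩
    · exact Finset.mem_image.mpr ⟨x, Finset.mem_erase.mpr ⟨hxu, hx⟩, rfl⟩
  have h1 : nccAux H ≤ (t.erase (g u)).card := by
    rw [nccAux, himg]
    exact le_trans (Finset.card_le_card hsub) (Finset.card_image_le)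
  have h2 : (t.erase (g u)).card = t.card - 1 := Finset.card_erase_of_mem hgu
  have h3 : 1 ≤ t.card := Finset.card_pos.mpr ⟨g u, hgu⟩
  omega

lemma cover_sum {V : Type*} [Fintype V] [DecidableEq V] {α : Type*} (f : V → α) (K : Finset ℕ)
    (Gc : ℕ → SimpleGraph V)
    (cover : ∀ u v : V, u ≠ v → f u = f v → ∃ k ∈ K, (Gc k).Reachable u v)
    (s : Finset V) :
    (s.card : ℤ) - (s.image f).card ≤
      ∑ k ∈ K, ((s.card : ℤ) -
        (s.image fun v => (f v, (Gc k).connectedComponentMk v)).card) := by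
  induction s using Finset.strongInduction with
  | _ s ih =>
  rcases s.eq_empty_or_nonempty with rfl | ⟨v, hv⟩
  · simp
  · set s' := s.erase v with hs'def
    have hsub : s' ⊂ s := Finset.erase_ssubset hv
    have hins : s = insert v s' := (Finset.insert_erase hv).symm
    have hvns : v ∉ s' := Finset.notMem_erase v s
    have hcard : (s.card : ℤ) = (s'.card : ℤ) + 1 := by
      rw [hins, Finset.card_insert_of_notMem hvns]; push_cast; ring
    have IH := ih s' hsub
    have hNle : ∀ k : ℕ,
        ((s.image fun x => (f x, (Gc k).connectedComponentMk x)).card : ℤ) ≤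
        ((s'.image fun x => (f x, (Gc k).connectedComponentMk x)).card : ℤ) + 1 := by
      intro k
      rw [hins, Finset.image_insert]
      exact_mod_cast Finset.card_insert_le _ _
    by_cases hA : ∃ u ∈ s', f u = f v
    · obtain ⟨u, hu, hfu⟩ := hA
      have hune : u ≠ v := Finset.ne_of_mem_erase hu
      obtain ⟨k, hk, hr⟩ := cover u v hune hfu
      have h1 : (s.image f).card = (s'.image f).card := by
        rw [hins, Finset.image_insert, Finset.card_insert_of_mem]
        exact hfu ▸ Finset.mem_image_of_mem f hu
      have h2 : (s.image fun x => (f x, (Gc k).connectedComponentMk x)).card =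
          (s'.image fun x => (f x, (Gc k).connectedComponentMk x)).card := by
        rw [hins, Finset.image_insert, Finset.card_insert_of_mem]
        have : (f v, (Gc k).connectedComponentMk v) = (f u, (Gc k).connectedComponentMk u) :=
          Prod.ext hfu.symm (ConnectedComponent.sound hr).symm
        rw [this]
        exact Finset.mem_image_of_mem _ hu
      have hstrict : ∑ k' ∈ K, ((s'.card : ℤ) -
            (s'.image fun x => (f x, (Gc k').connectedComponentMk x)).card) <
          ∑ k' ∈ K, ((s.card : ℤ) -
            (s.image fun x => (f x, (Gc k').connectedComponentMk x)).card) := by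
        apply Finset.sum_lt_sum
        · intro k' _
          have := hNle k'
          omega
        · refine ⟨k, hk, ?_⟩
          rw [h2]
          omega
      have h1' : ((s.image f).card : ℤ) = ((s'.image f).card : ℤ) := by exact_mod_cast h1
      linarith
    · push_neg at hA
      have h1 : (s.image f).card = (s'.image f).card + 1 := by
        rw [hins, Finset.image_insert, Finset.card_insert_of_notMem]
        intro hmem
        obtain ⟨u, hu, hfu⟩ := Finset.mem_image.mp hmem
        exact hA u hu hfu
      have hrest : ∑ k' ∈ K, ((s'.card : ℤ) -
            (s'.image fun x => (f x, (Gc k').connectedComponentMk x)).card) ≤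
          ∑ k' ∈ K, ((s.card : ℤ) -
            (s.image fun x => (f x, (Gc k').connectedComponentMk x)).card) := by
        apply Finset.sum_le_sum
        intro k' _
        have := hNle k'
        omega
      rw [h1]
      push_cast
      omega

lemma ncard_image_coe {V β : Type*} [DecidableEq β] (g : V → β) (s : Finset V) :
    (g '' ↑s).ncard = (s.image g).card := by
  rw [← Finset.coe_image, Set.ncard_coe_finset]

lemma ncc_lt_classes' {V : Type*} [Fintype V] {α : Type*} (f : V → α) (H : SimpleGraph V)
    {u v : V} (huv : H.Adj u v) (hf : f u ≠ f v) :
    nccAux H + 1 ≤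
      ((fun x => (f x, H.connectedComponentMk x)) '' ↑(Finset.univ : Finset V)).ncard := by
  rw [ncard_image_coe]
  exact ncc_lt_classes f H huv hf

lemma cover_sum' {V : Type*} [Fintype V] [DecidableEq V] {α : Type*} (f : V → α) (K : Finset ℕ)
    (Gc : ℕ → SimpleGraph V)
    (cover : ∀ u v : V, u ≠ v → f u = f v → ∃ k ∈ K, (Gc k).Reachable u v)
    (s : Finset V) :
    (s.card : ℤ) - ((f '' ↑s).ncard : ℤ) ≤
      ∑ k ∈ K, ((s.card : ℤ) -
        (((fun v => (f v, (Gc k).connectedComponentMk v)) '' ↑s).ncard : ℤ)) := by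
  have h := cover_sum f K Gc cover s
  simp only [ncard_image_coe]
  exact h

end MCAux

/-- For every connected graph `G` with `n` vertices and `m` edges,
`mc(G) ≤ m - n + χ(G)` where `χ(G)` is the chromatic number. -/
theorem mc_le_chromaticNumber {V : Type*} [Fintype V] [DecidableEq V]
    (G : SimpleGraph V) [DecidableRel G.Adj] (hG : G.Connected) :
    (mcNum G : ℤ) ≤
      (G.edgeFinset.card : ℤ) - (Fintype.card V : ℤ) + (G.chromaticNumber.toNat : ℤ) := by
  classical
  obtain ⟨C⟩ : G.Colorable G.chromaticNumber.toNat := colorable_chromaticNumber_of_fintype G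
  set f : V → Fin G.chromaticNumber.toNat := fun v => C v with hf
  have hSne : {k | ∃ c : Sym2 V → ℕ, IsMCColoring G c ∧ (Set.image c G.edgeSet).ncard = k}.Nonempty := by
    refine ⟨(Set.image (fun _ => 0) G.edgeSet).ncard, (fun _ => 0), ?_, rfl⟩
    intro u v
    obtain ⟨w⟩ := hG.preconnected u v
    exact ⟨w.toPath.1, w.toPath.2, 0, fun e _ => rfl⟩
  have hbdd : BddAbove {k | ∃ c : Sym2 V → ℕ, IsMCColoring G c ∧ (Set.image c G.edgeSet).ncard = k} := by
    refine ⟨G.edgeFinset.card, ?_⟩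
    rintro x ⟨c, _, rfl⟩
    calc (Set.image c G.edgeSet).ncard ≤ G.edgeSet.ncard := Set.ncard_image_le G.edgeSet.toFinite
      _ = G.edgeFinset.card := by rw [← coe_edgeFinset, Set.ncard_coe_finset]
  obtain ⟨c, hMC, hcnt⟩ := Nat.sSup_mem hSne hbdd
  set K : Finset ℕ := G.edgeFinset.image c with hK
  have hmc : (mcNum G : ℤ) = (K.card : ℤ) := by
    have h1 : mcNum G = (Set.image c G.edgeSet).ncard := hcnt.symm
    have h2 : (Set.image c G.edgeSet).ncard = K.card := by
      rw [← coe_edgeFinset, ← Finset.coe_image, Set.ncard_coe_finset]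
    rw [h1, h2]
  set Gc : ℕ → SimpleGraph V := fun k => G.deleteEdges {e | c e ≠ k} with hGc
  have hGcE : ∀ k, (Gc k).edgeSet = ↑(G.edgeFinset.filter (fun e => c e = k)) := by
    intro k
    rw [hGc]
    simp only [edgeSet_deleteEdges]
    ext e
    simp only [Set.mem_diff, Set.mem_setOf_eq, not_not, Finset.coe_filter, mem_edgeFinset,
      Set.mem_setOf_eq]
  have hEcard : ∀ k, (Gc k).edgeSet.ncard = (G.edgeFinset.filter (fun e => c e = k)).card :=
    fun k => by rw [hGcE k, Set.ncard_coe_finset]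
  have hm : G.edgeFinset.card = ∑ k ∈ K, (G.edgeFinset.filter (fun e => c e = k)).card :=
    Finset.card_eq_sum_card_fiberwise (fun e he => Finset.mem_image_of_mem c he)
  have hper : ∀ k ∈ K, ((Fintype.card V : ℤ) -
      ((((fun x => (f x, (Gc k).connectedComponentMk x)) '' ↑(Finset.univ : Finset V)).ncard : ℤ))) ≤
      ((G.edgeFinset.filter (fun e => c e = k)).card : ℤ) - 1 := by
    intro k hk
    obtain ⟨e, he, hce⟩ := Finset.mem_image.mp hk
    induction e with
    | h u v =>
      have hadj : (Gc k).Adj u v := by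
        rw [← mem_edgeSet, hGcE k]
        simp only [Finset.coe_filter, Set.mem_setOf_eq]
        exact ⟨he, hce⟩
      have hGadj : G.Adj u v := (deleteEdges_le _) hadj
      have hfne : f u ≠ f v := C.valid hGadj
      have h1 := card_le_ncard_edgeSet_add_ncc (Gc k)
      have h2 := ncc_lt_classes' f (Gc k) hadj hfne
      rw [hEcard k] at h1
      omega
  have hcover : ∀ u v : V, u ≠ v → f u = f v → ∃ k ∈ K, (Gc k).Reachable u v := by
    intro u v hne hfeq
    obtain ⟨p, hp, k0, hk0⟩ := hMC u v
    have hpe : p.edges ≠ [] := by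
      intro h
      apply hne
      apply Walk.eq_of_length_eq_zero
      rw [← Walk.length_edges, h]
      rfl
    obtain ⟨e0, he0⟩ := List.exists_mem_of_ne_nil p.edges hpe
    have hk0K : k0 ∈ K :=
      Finset.mem_image.mpr ⟨e0, mem_edgeFinset.mpr (p.edges_subset_edgeSet he0), hk0 e0 he0⟩
    refine ⟨k0, hk0K, ⟨p.transfer (Gc k0) ?_⟩⟩
    intro e he
    rw [hGcE k0]
    simp only [Finset.coe_filter, mem_edgeFinset, Set.mem_setOf_eq]
    exact ⟨p.edges_subset_edgeSet he, hk0 e he⟩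
  have hsum := cover_sum' f K Gc hcover Finset.univ
  rw [Finset.card_univ] at hsum
  have hχ : ((f '' ↑(Finset.univ : Finset V)).ncard : ℤ) ≤ (G.chromaticNumber.toNat : ℤ) := by
    have h1 : (f '' ↑(Finset.univ : Finset V)).ncard ≤
        (Set.univ : Set (Fin G.chromaticNumber.toNat)).ncard := by
      apply Set.ncard_le_ncard (Set.subset_univ _) Set.finite_univ
    have h2 : (Set.univ : Set (Fin G.chromaticNumber.toNat)).ncard
        = G.chromaticNumber.toNat := by
      simp [Set.ncard_univ]
    omega
  have hsum2 : ∑ k ∈ K, ((Fintype.card V : ℤ) -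
      ((((fun v => (f v, (Gc k).connectedComponentMk v)) '' ↑(Finset.univ : Finset V)).ncard : ℤ))) ≤
      ∑ k ∈ K, (((G.edgeFinset.filter (fun e => c e = k)).card : ℤ) - 1) :=
    Finset.sum_le_sum hper
  have hm' : ∑ k ∈ K, (((G.edgeFinset.filter (fun e => c e = k)).card : ℤ) - 1)
      = (G.edgeFinset.card : ℤ) - K.card := by
    rw [Finset.sum_sub_distrib, Finset.sum_const, hm]
    push_cast
    ring
  rw [hm'] at hsum2
  rw [hmc]
  linarith
end

section
/- Let G be a connected simple graph with n vertices and m edges, and let r be a positive integer. If G is not r-connected, then mc(G) ≤ m − n + r. -/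
open SimpleGraph Filter Real

/-- A graph is `k`-connected if it has more than `k` vertices and deleting any
set of fewer than `k` vertices leaves it connected. -/
def IsKConnected {V : Type*} [Fintype V] (G : SimpleGraph V) (k : ℕ) : Prop :=
  k < Fintype.card V ∧
    ∀ S : Finset V, S.card < k → (G.induce ((S : Set V)ᶜ)).Connected

section MCAux

variable {V : Type*}

/-- Every vertex on the support of a non-nil walk is incident to some edge of it. -/
private lemma walk_support_incident {G : SimpleGraph V} :
    ∀ {u v : V} (p : G.Walk u v), ¬ p.Nil → ∀ w ∈ p.support, ∃ e ∈ p.edges, w ∈ e := by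
  intro u v p
  induction p with
  | nil => intro h; simp at h
  | @cons a b d h q ih =>
    intro _ w hw
    rw [Walk.support_cons] at hw
    rcases List.mem_cons.mp hw with rfl | hw
    · exact ⟨s(w, b), by simp, Sym2.mem_mk_left _ _⟩
    · cases q with
      | nil =>
        simp only [Walk.support_nil, List.mem_singleton] at hw
        subst hw
        exact ⟨s(a, w), by simp, Sym2.mem_mk_right _ _⟩
      | cons h' q' =>
        obtain ⟨e, he, hwe⟩ := ih Walk.not_nil_cons w hw
        exact ⟨e, by rw [Walk.edges_cons]; exact List.mem_cons_of_mem _ he, hwe⟩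

/-- A first step of a shortest walk strictly decreases the distance. -/
private lemma exists_adj_dist_lt {H : SimpleGraph V} {u ρ : V} (hreach : H.Reachable u ρ)
    (hne : u ≠ ρ) : ∃ v, H.Adj u v ∧ H.dist v ρ < H.dist u ρ := by
  obtain ⟨p, hp⟩ := hreach.exists_walk_length_eq_dist
  cases p with
  | nil => exact absurd rfl hne
  | @cons _ b _ h q =>
    refine ⟨b, h, ?_⟩
    have h1 := SimpleGraph.dist_le q
    rw [← hp, Walk.length_cons]
    omega

/-- A walk whose support avoids the deleted set yields reachability in the induced graph. -/
private lemma induce_reachable_of_support {G : SimpleGraph V} {Sc : Set V} :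
    ∀ {u v : V} (p : G.Walk u v), (∀ w ∈ p.support, w ∈ Sc) → ∀ (hu : u ∈ Sc) (hv : v ∈ Sc),
      (G.induce Sc).Reachable ⟨u, hu⟩ ⟨v, hv⟩ := by
  intro u v p
  induction p with
  | nil => intro _ hu hv; exact Reachable.refl _
  | @cons a b d h q ih =>
    intro hs hu hv
    have hb : b ∈ Sc := hs b (by simp)
    have hadj : (G.induce Sc).Adj ⟨a, hu⟩ ⟨b, hb⟩ := by simpa using h
    exact hadj.reachable.trans (ih (fun w hw => hs w (by simp [hw])) hb hv)

/-- The subgraph of `G` on edges of color `k`. -/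
private def colorGraph (G : SimpleGraph V) (c : Sym2 V → ℕ) (k : ℕ) : SimpleGraph V where
  Adj a b := G.Adj a b ∧ c s(a, b) = k
  symm := ⟨fun a b hab => ⟨hab.1.symm, by rw [Sym2.eq_swap]; exact hab.2⟩⟩
  loopless := ⟨fun a ha => G.irrefl ha.1⟩

/-- Component (as a set) of `v` in the color-`k` subgraph. -/
private def mccomp (G : SimpleGraph V) (c : Sym2 V → ℕ) (k : ℕ) (v : V) : Set V :=
  {w | (colorGraph G c k).Reachable v w}

private lemma mccomp_congr {G : SimpleGraph V} {c : Sym2 V → ℕ} {k : ℕ} {u v : V}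
    (h : (colorGraph G c k).Reachable u v) : mccomp G c k u = mccomp G c k v :=
  Set.ext fun w => ⟨fun hw => h.symm.trans hw, fun hw => h.trans hw⟩

/-- The refined class key of an edge: its color together with the component of its
endpoints in the corresponding color subgraph. -/
private noncomputable def ckey (G : SimpleGraph V) (c : Sym2 V → ℕ) : Sym2 V → ℕ × Set V :=
  Sym2.lift ⟨fun a b => (c s(a, b), mccomp G c (c s(a, b)) a ∪ mccomp G c (c s(a, b)) b), by
    intro a b
    dsimp only
    rw [show s(a, b) = s(b, a) from Sym2.eq_swap, Set.union_comm]⟩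

private lemma ckey_mk (G : SimpleGraph V) (c : Sym2 V → ℕ) (a b : V) :
    ckey G c s(a, b) = (c s(a, b), mccomp G c (c s(a, b)) a ∪ mccomp G c (c s(a, b)) b) :=
  Sym2.lift_mk _ _ _

private lemma ckey_fst (G : SimpleGraph V) (c : Sym2 V → ℕ) (e : Sym2 V) :
    (ckey G c e).1 = c e := by
  refine Sym2.inductionOn e fun x y => ?_
  rw [ckey_mk]

private lemma ckey_adj {G : SimpleGraph V} {c : Sym2 V → ℕ} {k : ℕ} {a b : V}
    (h : (colorGraph G c k).Adj a b) : ckey G c s(a, b) = (k, mccomp G c k a) := by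
  have hc' : c s(a, b) = k := h.2
  rw [ckey_mk, hc', ← mccomp_congr h.reachable, Set.union_self]

/-- Edges of `G` in the class `j`. -/
private noncomputable def classEdges [Fintype V] [DecidableEq V] (G : SimpleGraph V)
    [DecidableRel G.Adj] (c : Sym2 V → ℕ) (j : ℕ × Set V) : Finset (Sym2 V) :=
  @Finset.filter _ (fun e => ckey G c e = j) (fun _ => Classical.propDecidable _) G.edgeFinset

/-- Vertices incident to an edge of class `j`. -/
private noncomputable def classVerts [Fintype V] [DecidableEq V] (G : SimpleGraph V)
    [DecidableRel G.Adj] (c : Sym2 V → ℕ) (j : ℕ × Set V) : Finset V :=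
  @Finset.filter _ (fun v => ∃ e ∈ classEdges G c j, v ∈ e)
    (fun _ => Classical.propDecidable _) Finset.univ

private noncomputable local instance : DecidableEq (Set V) := Classical.decEq _

/-- The graph consisting of edges of class `j`. -/
private def classGraph [Fintype V] [DecidableEq V] (G : SimpleGraph V)
    [DecidableRel G.Adj] (c : Sym2 V → ℕ) (j : ℕ × Set V) : SimpleGraph V where
  Adj a b := a ≠ b ∧ s(a, b) ∈ classEdges G c j
  symm := ⟨fun a b hab => ⟨hab.1.symm, by rw [Sym2.eq_swap]; exact hab.2⟩⟩
  loopless := ⟨fun a ha => ha.1 rfl⟩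

variable [Fintype V] [DecidableEq V] {G : SimpleGraph V} [DecidableRel G.Adj]
  {c : Sym2 V → ℕ} {j : ℕ × Set V}

private lemma mem_classEdges {e : Sym2 V} :
    e ∈ classEdges G c j ↔ e ∈ G.edgeFinset ∧ ckey G c e = j := by
  simp [classEdges]

private lemma mem_classVerts {v : V} :
    v ∈ classVerts G c j ↔ ∃ e ∈ classEdges G c j, v ∈ e := by
  simp [classVerts]

private lemma class_key_of_mem {u : V} {e : Sym2 V}
    (he : e ∈ classEdges G c j) (hue : u ∈ e) :
    j.1 = c e ∧ j.2 = mccomp G c j.1 u := by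
  rw [mem_classEdges] at he
  obtain ⟨h1, h2⟩ := he
  obtain ⟨w, rfl⟩ : ∃ w, e = s(u, w) := ⟨Sym2.Mem.other hue, (Sym2.other_spec hue).symm⟩
  have hGe : G.Adj u w := (SimpleGraph.mem_edgeSet G).mp (SimpleGraph.mem_edgeFinset.mp h1)
  have hadj : (colorGraph G c (c s(u, w))).Adj u w := ⟨hGe, rfl⟩
  have hck := ckey_adj (G := G) (c := c) hadj
  rw [hck] at h2
  exact ⟨by rw [← h2], by rw [← h2]⟩

/-- Any two vertices incident to edges of class `j` are joined within the class graph. -/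
private lemma class_reach {u v : V}
    (hu : u ∈ classVerts G c j) (hv : v ∈ classVerts G c j) :
    (classGraph G c j).Reachable u v := by
  rw [mem_classVerts] at hu hv
  obtain ⟨e, he, hue⟩ := hu
  obtain ⟨f, hf, hvf⟩ := hv
  have hku := class_key_of_mem he hue
  have hkv := class_key_of_mem hf hvf
  have hr : (colorGraph G c j.1).Reachable u v := by
    have hv' : v ∈ mccomp G c j.1 v := Reachable.refl v
    rw [← hkv.2, hku.2] at hv'
    exact hv'
  obtain ⟨q⟩ := hr
  have hedges : ∀ ed ∈ q.edges, ed ∈ (classGraph G c j).edgeSet := by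
    intro ed hed
    revert hed
    refine Sym2.inductionOn ed ?_
    intro x y hed
    have hxy : (colorGraph G c j.1).Adj x y := q.adj_of_mem_edges hed
    have hxs : x ∈ q.support := q.fst_mem_support_of_mem_edges hed
    have hrx : (colorGraph G c j.1).Reachable u x := ⟨q.takeUntil x hxs⟩
    have h5 : ckey G c s(x, y) = j := by
      have hck := ckey_adj (G := G) (c := c) hxy
      rw [hck, ← mccomp_congr hrx, ← hku.2]
    have hedge : s(x, y) ∈ classEdges G c j :=
      mem_classEdges.mpr ⟨SimpleGraph.mem_edgeFinset.mpr ((SimpleGraph.mem_edgeSet G).mpr hxy.1), h5⟩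
    exact (SimpleGraph.mem_edgeSet (classGraph G c j)).mpr ⟨hxy.ne, hedge⟩
  exact ⟨q.transfer _ hedges⟩

/-- A non-nil monochromatic walk has all its edges in a single class. -/
private lemma path_class {u v : V} {k : ℕ} (p : G.Walk u v) (hnil : ¬ p.Nil)
    (hmono : ∀ e ∈ p.edges, c e = k) :
    ∃ j, j ∈ G.edgeFinset.image (ckey G c) ∧ ∀ e ∈ p.edges, e ∈ classEdges G c j := by
  have hsub : ∀ e ∈ p.edges, e ∈ (colorGraph G c k).edgeSet := by
    intro e he
    have h1 : e ∈ G.edgeSet := p.edges_subset_edgeSet he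
    have h2 : c e = k := hmono e he
    revert h1 h2
    refine Sym2.inductionOn e (fun x y => ?_)
    intro h1 h2
    exact (SimpleGraph.mem_edgeSet (colorGraph G c k)).mpr ⟨(SimpleGraph.mem_edgeSet G).mp h1, h2⟩
  have hqe : (p.transfer (colorGraph G c k) hsub).edges = p.edges := p.edges_transfer hsub
  have hall : ∀ e ∈ p.edges, e ∈ classEdges G c (k, mccomp G c k u) := by
    intro e he
    have he' : e ∈ (p.transfer (colorGraph G c k) hsub).edges := by rw [hqe]; exact he
    have hG : e ∈ G.edgeSet := p.edges_subset_edgeSet he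
    revert he' hG
    refine Sym2.inductionOn e (fun x y => ?_)
    intro he' hG
    have hadj : (colorGraph G c k).Adj x y :=
      (p.transfer (colorGraph G c k) hsub).adj_of_mem_edges he'
    have hxs : x ∈ (p.transfer (colorGraph G c k) hsub).support :=
      (p.transfer (colorGraph G c k) hsub).fst_mem_support_of_mem_edges he'
    have hrx : (colorGraph G c k).Reachable u x :=
      ⟨(p.transfer (colorGraph G c k) hsub).takeUntil x hxs⟩
    have h5 : ckey G c s(x, y) = (k, mccomp G c k u) := by
      have hck := ckey_adj (G := G) (c := c) hadj
      rw [hck, ← mccomp_congr hrx]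
    exact mem_classEdges.mpr ⟨SimpleGraph.mem_edgeFinset.mpr hG, h5⟩
  refine ⟨(k, mccomp G c k u), ?_, hall⟩
  cases p with
  | nil => simp at hnil
  | @cons _ b _ h q =>
    have he0 : s(u, b) ∈ (Walk.cons h q).edges := by simp
    have hmem := hall _ he0
    rw [mem_classEdges] at hmem
    exact Finset.mem_image.mpr ⟨s(u, b), hmem.1, hmem.2⟩

/-- The key counting inequality: if deleting `S` disconnects `G`, then any MC-coloring
uses at most `m - n + |S| + 1` colors (stated without subtraction). -/
private lemma mc_key_count (G : SimpleGraph V) [DecidableRel G.Adj]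
    (c : Sym2 V → ℕ) (hc : IsMCColoring G c)
    (S : Finset V) (hS : ¬ (G.induce ((S : Set V)ᶜ)).Connected)
    (hcard : S.card < Fintype.card V) :
    (G.edgeFinset.image c).card + Fintype.card V ≤ G.edgeFinset.card + S.card + 1 := by
  classical
  set Sc : Set V := ((S : Set V))ᶜ with hSc
  have hWcard : (Sᶜ : Finset V).card = Fintype.card V - S.card := Finset.card_compl S
  have hWne : (Sᶜ : Finset V).Nonempty := by
    rw [← Finset.card_pos, hWcard]; omega
  have hne : Nonempty Sc := by
    obtain ⟨v0, hv0⟩ := hWne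
    exact ⟨⟨v0, by simpa [hSc] using Finset.mem_compl.mp hv0⟩⟩
  have hpre : ¬ (G.induce Sc).Preconnected := fun hp => hS ((connected_iff _).mpr ⟨hp, hne⟩)
  unfold SimpleGraph.Preconnected at hpre
  push_neg at hpre
  obtain ⟨x, y, hxy⟩ := hpre
  set a0 : V := (x : V) with ha0
  set b0 : V := (y : V) with hb0
  have hxy_ne : x ≠ y := fun h => hxy (h ▸ Reachable.refl x)
  set A : Set V := {v | ∃ h : v ∈ Sc, (G.induce Sc).Reachable x ⟨v, h⟩} with hA
  have ha0Sc : a0 ∈ Sc := x.2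
  have hb0Sc : b0 ∈ Sc := y.2
  have ha0A : a0 ∈ A := ⟨x.2, Reachable.refl x⟩
  have hb0A : b0 ∉ A := by
    rintro ⟨h, hr⟩
    exact hxy (by rwa [show (⟨b0, h⟩ : Sc) = y from Subtype.ext rfl] at hr)
  have hASc : A ⊆ Sc := fun v hv => hv.choose
  have ha0_ne_b0 : a0 ≠ b0 := fun h => hxy_ne (Subtype.ext h)
  set D : V → ℕ := fun v => if v = b0 then 0 else if v ∈ A then 1 else if v ∈ S then 3 else 2
    with hD
  have hDb0 : D b0 = 0 := by simp [hD]
  have hDA : ∀ v ∈ A, D v = 1 := by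
    intro v hv
    have hvb : v ≠ b0 := fun h => hb0A (h ▸ hv)
    simp [hD, hvb, hv]
  have hDS : ∀ v ∈ S, D v = 3 := by
    intro v hv
    have h1 : v ≠ b0 := by rintro rfl; exact hb0Sc (by simpa [hSc] using hv)
    have h2 : v ∉ A := fun hvA => (hASc hvA) (by simpa [hSc] using hv)
    simp [hD, h1, h2, hv]
  have hDB : ∀ v, v ∈ Sc → v ∉ A → v ≠ b0 → D v = 2 := by
    intro v h1 h2 h3
    have h4 : v ∉ S := by intro hvS; exact h1 (by simpa [hSc] using hvS)
    simp [hD, h2, h3, h4]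
  have hDle : ∀ v, D v ≤ 3 := by
    intro v
    rw [hD]
    dsimp only
    split_ifs <;> omega
  set K : Finset (ℕ × Set V) := G.edgeFinset.image (ckey G c) with hK
  -- per-class roots minimizing D
  have hρex : ∀ j : ℕ × Set V, ∃ v, j ∈ K →
      (v ∈ classVerts G c j ∧ ∀ u ∈ classVerts G c j, D v ≤ D u) := by
    intro j
    by_cases hj : j ∈ K
    · have hne' : (classVerts G c j).Nonempty := by
        rw [hK, Finset.mem_image] at hj
        obtain ⟨e, heE, hej⟩ := hj
        have hex : ∃ v, v ∈ e := Sym2.inductionOn e fun x y => ⟨x, Sym2.mem_mk_left x y⟩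
        obtain ⟨v, hv⟩ := hex
        exact ⟨v, mem_classVerts.mpr ⟨e, mem_classEdges.mpr ⟨heE, hej⟩, hv⟩⟩
      obtain ⟨b, hb, hmin⟩ := Finset.exists_min_image (classVerts G c j) D hne'
      exact ⟨b, fun _ => ⟨hb, hmin⟩⟩
    · exact ⟨b0, fun h => absurd h hj⟩
  choose ρ hρ using hρex
  -- shortest-path step toward the root
  have hstepex : ∀ (j : ℕ × Set V) (v : V), ∃ v',
      ((classGraph G c j).Reachable v (ρ j) ∧ v ≠ ρ j) →
      (classGraph G c j).Adj v v' ∧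
        (classGraph G c j).dist v' (ρ j) < (classGraph G c j).dist v (ρ j) := by
    intro j v
    by_cases h : (classGraph G c j).Reachable v (ρ j) ∧ v ≠ ρ j
    · obtain ⟨v', h1, h2⟩ := exists_adj_dist_lt h.1 h.2
      exact ⟨v', fun _ => ⟨h1, h2⟩⟩
    · exact ⟨b0, fun h' => absurd h' h⟩
  choose nxt hnxt using hstepex
  have hφmem : ∀ j v, ((classGraph G c j).Reachable v (ρ j) ∧ v ≠ ρ j) →
      s(v, nxt j v) ∈ classEdges G c j := fun j v hv => ((hnxt j v hv).1).2
  have hφinj : ∀ j v w, ((classGraph G c j).Reachable v (ρ j) ∧ v ≠ ρ j) →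
      ((classGraph G c j).Reachable w (ρ j) ∧ w ≠ ρ j) →
      s(v, nxt j v) = s(w, nxt j w) → v = w := by
    intro j v w hv hw heq
    rcases Sym2.eq_iff.mp heq with ⟨h1, _⟩ | ⟨h1, h2⟩
    · exact h1
    · exfalso
      have hv' := (hnxt j v hv).2
      have hw' := (hnxt j w hw).2
      rw [h2] at hv'
      rw [← h1] at hw'
      omega
  -- charged classes for vertices outside S (other than b0)
  have hchargeex : ∀ w : V, ∃ j, w ∈ (Sᶜ : Finset V).erase b0 →
      (j ∈ K ∧ w ∈ classVerts G c j ∧ (∃ p ∈ classVerts G c j, D p < D w) ∧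
        ∃ s', s' ∈ S ∧ s' ∈ classVerts G c j) := by
    intro w
    by_cases hw : w ∈ (Sᶜ : Finset V).erase b0
    swap
    · exact ⟨(0, ∅), fun h => absurd h hw⟩
    · have hwb0 : w ≠ b0 := (Finset.mem_erase.mp hw).1
      have hwS : w ∉ S := Finset.mem_compl.mp (Finset.mem_erase.mp hw).2
      have hwSc : w ∈ Sc := by simpa [hSc] using hwS
      by_cases hwA : w ∈ A
      · -- partner b0
        obtain ⟨p, _, k, hk⟩ := hc w b0
        have hnil : ¬ p.Nil := Walk.not_nil_of_ne hwb0
        obtain ⟨j, hjK, hall⟩ := path_class p hnil hk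
        have hsupp : ∀ z ∈ p.support, z ∈ classVerts G c j := by
          intro z hz
          obtain ⟨e, he, hze⟩ := walk_support_incident p hnil z hz
          exact mem_classVerts.mpr ⟨e, hall e he, hze⟩
        have hwV : w ∈ classVerts G c j := hsupp w p.start_mem_support
        have hb0V : b0 ∈ classVerts G c j := hsupp b0 p.end_mem_support
        have hsS : ∃ s', s' ∈ S ∧ s' ∈ p.support := by
          by_contra hno
          push_neg at hno
          have hsub : ∀ z ∈ p.support, z ∈ Sc := by
            intro z hz
            by_contra hzS
            have hzS' : z ∈ S := by
              by_contra h'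
              exact hzS (by simpa [hSc] using h')
            exact hno z hzS' hz
          have hreach := induce_reachable_of_support p hsub hwSc hb0Sc
          obtain ⟨hw', hra⟩ := hwA
          have h1 : (G.induce Sc).Reachable x ⟨w, hwSc⟩ := hra
          have h2 : (⟨b0, hb0Sc⟩ : Sc) = y := Subtype.ext rfl
          exact hxy (h1.trans (h2 ▸ hreach))
        obtain ⟨s', hs'S, hs'supp⟩ := hsS
        refine ⟨j, fun _ => ⟨hjK, hwV, ⟨b0, hb0V, ?_⟩, ⟨s', hs'S, hsupp s' hs'supp⟩⟩⟩
        rw [hDb0, hDA w hwA]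
        omega
      · -- partner a0
        obtain ⟨p, _, k, hk⟩ := hc w a0
        have hwa0 : w ≠ a0 := fun h => hwA (h ▸ ha0A)
        have hnil : ¬ p.Nil := Walk.not_nil_of_ne hwa0
        obtain ⟨j, hjK, hall⟩ := path_class p hnil hk
        have hsupp : ∀ z ∈ p.support, z ∈ classVerts G c j := by
          intro z hz
          obtain ⟨e, he, hze⟩ := walk_support_incident p hnil z hz
          exact mem_classVerts.mpr ⟨e, hall e he, hze⟩
        have hwV : w ∈ classVerts G c j := hsupp w p.start_mem_support
        have ha0V : a0 ∈ classVerts G c j := hsupp a0 p.end_mem_support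
        have hsS : ∃ s', s' ∈ S ∧ s' ∈ p.support := by
          by_contra hno
          push_neg at hno
          have hsub : ∀ z ∈ p.support, z ∈ Sc := by
            intro z hz
            by_contra hzS
            have hzS' : z ∈ S := by
              by_contra h'
              exact hzS (by simpa [hSc] using h')
            exact hno z hzS' hz
          have hreach := induce_reachable_of_support p hsub hwSc ha0Sc
          have h2 : (⟨a0, ha0Sc⟩ : Sc) = x := Subtype.ext rfl
          exact hwA ⟨hwSc, (h2 ▸ hreach).symm⟩
        obtain ⟨s', hs'S, hs'supp⟩ := hsS
        refine ⟨j, fun _ => ⟨hjK, hwV, ⟨a0, ha0V, ?_⟩, ⟨s', hs'S, hsupp s' hs'supp⟩⟩⟩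
        rw [hDA a0 ha0A, hDB w hwSc hwA hwb0]
        omega
  choose jw hjw using hchargeex
  have hwcond : ∀ w ∈ (Sᶜ : Finset V).erase b0,
      (classGraph G c (jw w)).Reachable w (ρ (jw w)) ∧ w ≠ ρ (jw w) := by
    intro w hw
    obtain ⟨hjK, hwV, ⟨p', hp'V, hp'lt⟩, _⟩ := hjw w hw
    obtain ⟨hρV, hρmin⟩ := hρ (jw w) hjK
    refine ⟨class_reach hwV hρV, ?_⟩
    intro h
    have hmle := hρmin p' hp'V
    rw [← h] at hmle
    omega
  have hQ : ∀ w ∈ (Sᶜ : Finset V).erase b0,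
      ∃ s', s' ∈ S ∧
        ((classGraph G c (jw w)).Reachable s' (ρ (jw w)) ∧ s' ≠ ρ (jw w)) := by
    intro w hw
    obtain ⟨hjK, hwV, ⟨p', hp'V, hp'lt⟩, s', hs'S, hs'V⟩ := hjw w hw
    obtain ⟨hρV, hρmin⟩ := hρ (jw w) hjK
    refine ⟨s', hs'S, class_reach hs'V hρV, ?_⟩
    intro h
    have h1 := hρmin p' hp'V
    have h2 : D s' = 3 := hDS s' hs'S
    rw [h] at h2
    have hw3 : D w ≤ 3 := hDle w
    omega
  -- representatives of classes
  have hrepex : ∀ j : ℕ × Set V, ∃ e, j ∈ K → (e ∈ classEdges G c j ∧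
      ((∃ s', s' ∈ S ∧ ((classGraph G c j).Reachable s' (ρ j) ∧ s' ≠ ρ j)) →
        ∃ s', s' ∈ S ∧ ((classGraph G c j).Reachable s' (ρ j) ∧ s' ≠ ρ j) ∧
          e = s(s', nxt j s'))) := by
    intro j
    by_cases hj : j ∈ K
    · by_cases hQ' : ∃ s', s' ∈ S ∧ ((classGraph G c j).Reachable s' (ρ j) ∧ s' ≠ ρ j)
      · obtain ⟨s', h1, h2⟩ := hQ'
        exact ⟨s(s', nxt j s'), fun _ => ⟨hφmem j s' h2, fun _ => ⟨s', h1, h2, rfl⟩⟩⟩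
      · have hj' := hj
        rw [hK, Finset.mem_image] at hj'
        obtain ⟨e, heE, hej⟩ := hj'
        exact ⟨e, fun _ => ⟨mem_classEdges.mpr ⟨heE, hej⟩, fun h => absurd h hQ'⟩⟩
    · exact ⟨s(b0, b0), fun h => absurd h hj⟩
  choose rep hrep using hrepex
  have hckey_rep : ∀ j ∈ K, ckey G c (rep j) = j :=
    fun j hj => (mem_classEdges.mp (hrep j hj).1).2
  have hrepE : ∀ j ∈ K, rep j ∈ G.edgeFinset :=
    fun j hj => (mem_classEdges.mp (hrep j hj).1).1
  have hedgew : ∀ w ∈ (Sᶜ : Finset V).erase b0,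
      s(w, nxt (jw w) w) ∈ classEdges G c (jw w) :=
    fun w hw => hφmem (jw w) w (hwcond w hw)
  set F1 : Finset (Sym2 V) := K.image rep with hF1
  set F2 : Finset (Sym2 V) := ((Sᶜ : Finset V).erase b0).image (fun w => s(w, nxt (jw w) w))
    with hF2
  have hF1card : F1.card = K.card := by
    rw [hF1]
    apply Finset.card_image_of_injOn
    intro j hj j' hj' h
    rw [← hckey_rep j hj, ← hckey_rep j' hj', h]
  have hF2card : F2.card = ((Sᶜ : Finset V).erase b0).card := by
    rw [hF2]
    apply Finset.card_image_of_injOn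
    intro w hw w' hw' h0
    have h : s(w, nxt (jw w) w) = s(w', nxt (jw w') w') := h0
    have h1 := (mem_classEdges.mp (hedgew w hw)).2
    have h2 := (mem_classEdges.mp (hedgew w' hw')).2
    have hj : jw w = jw w' := by rw [← h1, ← h2, h]
    rw [← hj] at h
    exact hφinj (jw w) w w' (hwcond w hw) (by rw [hj]; exact hwcond w' hw') h
  have hsubE : F1 ∪ F2 ⊆ G.edgeFinset := by
    intro e he
    rcases Finset.mem_union.mp he with he | he
    · obtain ⟨j, hj, rfl⟩ := Finset.mem_image.mp he
      exact hrepE j hj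
    · obtain ⟨w, hw, rfl⟩ := Finset.mem_image.mp he
      exact (mem_classEdges.mp (hedgew w hw)).1
  have hdisj : Disjoint F1 F2 := by
    rw [Finset.disjoint_left]
    intro e he1 he2
    obtain ⟨j, hjK', rfl⟩ := Finset.mem_image.mp he1
    obtain ⟨w, hw, hew0⟩ := Finset.mem_image.mp he2
    have hew : s(w, nxt (jw w) w) = rep j := hew0
    have h1 : ckey G c (rep j) = j := hckey_rep j hjK'
    have h2 : ckey G c (s(w, nxt (jw w) w)) = jw w := (mem_classEdges.mp (hedgew w hw)).2
    rw [← hew] at h1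
    have hj : j = jw w := by rw [← h1, h2]
    obtain ⟨s', hs'S, hs'cond, hs'eq⟩ := (hrep j hjK').2 (by rw [hj]; exact hQ w hw)
    have hsw : s' = w := by
      refine hφinj j s' w hs'cond (by rw [hj]; exact hwcond w hw) ?_
      rw [← hs'eq, ← hew, hj]
    have hwS : w ∉ S := Finset.mem_compl.mp (Finset.mem_erase.mp hw).2
    exact hwS (hsw ▸ hs'S)
  have hcards : K.card + ((Sᶜ : Finset V).erase b0).card ≤ G.edgeFinset.card := by
    calc K.card + ((Sᶜ : Finset V).erase b0).card = F1.card + F2.card := by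
          rw [hF1card, hF2card]
      _ = (F1 ∪ F2).card := (Finset.card_union_of_disjoint hdisj).symm
      _ ≤ G.edgeFinset.card := Finset.card_le_card hsubE
  have hqK : (G.edgeFinset.image c).card ≤ K.card := by
    have himg : G.edgeFinset.image c = K.image Prod.fst := by
      rw [hK, Finset.image_image]
      apply Finset.image_congr
      intro e _
      exact (ckey_fst G c e).symm
    rw [himg]
    exact Finset.card_image_le
  have hb0compl : b0 ∈ (Sᶜ : Finset V) := by
    rw [Finset.mem_compl]
    intro h
    exact hb0Sc (by simpa [hSc] using h)
  have herase : ((Sᶜ : Finset V).erase b0).card = (Sᶜ : Finset V).card - 1 :=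
    Finset.card_erase_of_mem hb0compl
  have hWpos : 1 ≤ (Sᶜ : Finset V).card := hWne.card_pos
  omega

end MCAux

/-- If a connected graph `G` is not `r`-connected (`r` a positive integer),
then `mc(G) ≤ m - n + r`. -/
theorem mc_le_of_not_r_connected {V : Type*} [Fintype V] [DecidableEq V]
    (G : SimpleGraph V) [DecidableRel G.Adj] (hG : G.Connected)
    (r : ℕ) (hr : 0 < r) (hnc : ¬ IsKConnected G r) :
    (mcNum G : ℤ) ≤ (G.edgeFinset.card : ℤ) - (Fintype.card V : ℤ) + (r : ℤ) := by
  classical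
  have hmc0 : IsMCColoring G (fun _ => 0) := by
    intro u v
    obtain ⟨p⟩ := hG.preconnected u v
    exact ⟨p.bypass, p.bypass_isPath, 0, fun _ _ => rfl⟩
  have hSne : {k | ∃ c : Sym2 V → ℕ, IsMCColoring G c ∧
      (Set.image c G.edgeSet).ncard = k}.Nonempty :=
    ⟨_, (fun _ => 0), hmc0, rfl⟩
  have hncard : ∀ c : Sym2 V → ℕ,
      (Set.image c G.edgeSet).ncard = (G.edgeFinset.image c).card := by
    intro c
    rw [← SimpleGraph.coe_edgeFinset, ← Finset.coe_image, Set.ncard_coe_finset]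
  by_cases hrn : r < Fintype.card V
  · rw [IsKConnected] at hnc
    push_neg at hnc
    obtain ⟨S, hScard, hSconn⟩ := hnc hrn
    have hSlt : S.card < Fintype.card V := lt_trans hScard hrn
    have key : ∀ k ∈ {k | ∃ c : Sym2 V → ℕ, IsMCColoring G c ∧
        (Set.image c G.edgeSet).ncard = k},
        k ≤ G.edgeFinset.card + S.card + 1 - Fintype.card V := by
      intro k hk
      obtain ⟨c, hcc, hkk⟩ := hk
      have hcnt := mc_key_count G c hcc S hSconn hSlt
      rw [hncard c] at hkk
      omega
    have h1 : mcNum G ≤ G.edgeFinset.card + S.card + 1 - Fintype.card V := csSup_le hSne key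
    have h2 := mc_key_count G (fun _ => 0) hmc0 S hSconn hSlt
    have h3 : S.card + 1 ≤ r := hScard
    omega
  · have hnr : Fintype.card V ≤ r := le_of_not_gt hrn
    have key : ∀ k ∈ {k | ∃ c : Sym2 V → ℕ, IsMCColoring G c ∧
        (Set.image c G.edgeSet).ncard = k}, k ≤ G.edgeFinset.card := by
      intro k hk
      obtain ⟨c, hcc, hkk⟩ := hk
      rw [hncard c] at hkk
      exact hkk ▸ Finset.card_image_le
    have h1 : mcNum G ≤ G.edgeFinset.card := csSup_le hSne key
    omega
end

section
/- Let ℓ > 0 be a real constant and let f : ℕ → ℝ satisfy ℓ·n·log n ≤ f(n) < n(n−1)/2 for all large n. Set p = p(n) = (f(n) + n·log log n)/n². Then with high probability (probability tending to 1 as n → ∞) the random graph G(n, p) satisfies mc(G(n, p)) < f(n). -/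
open SimpleGraph Filter Real

/-- The Erdős–Rényi probability that `G(n, q)` lies in the set `A`: each of the
`n.choose 2` possible edges appears independently with probability `q`, so a
graph with `m` edges has probability `q ^ m * (1 - q) ^ (n.choose 2 - m)`. -/
noncomputable def erProb (n : ℕ) (q : ℝ) (A : Set (SimpleGraph (Fin n))) : ℝ :=
  ∑ G : SimpleGraph (Fin n),
    A.indicator (fun G => q ^ G.edgeSet.ncard * (1 - q) ^ (n.choose 2 - G.edgeSet.ncard)) G

/-- A sequence of graph events holds with high probability in `G(n, q n)`:
its probability tends to `1` as `n → ∞`. -/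
def WHP (q : ℕ → ℝ) (A : ∀ n : ℕ, Set (SimpleGraph (Fin n))) : Prop :=
  Tendsto (fun n => erProb n (q n) (A n)) atTop (nhds 1)

/-- The mcNum of a graph is at most its number of edges. -/
lemma mcNum_le_ncard {V : Type*} [Fintype V] (G : SimpleGraph V) :
    mcNum G ≤ G.edgeSet.ncard := by
  apply csSup_le'
  rintro k ⟨c, _, rfl⟩
  exact Set.ncard_image_le G.edgeSet.toFinite

/-- Summing `a^(edges) * b^(non-edges)` over all graphs on `Fin n` gives `(a+b)^(n choose 2)`. -/
lemma sum_graphs (n : ℕ) (a b : ℝ) :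
    ∑ G : SimpleGraph (Fin n), a ^ G.edgeSet.ncard * b ^ (n.choose 2 - G.edgeSet.ncard)
      = (a + b) ^ n.choose 2 := by
  classical
  have hcard : (⊤ : SimpleGraph (Fin n)).edgeFinset.card = n.choose 2 := by
    rw [card_edgeFinset_top_eq_card_choose_two, Fintype.card_fin]
  set u := (⊤ : SimpleGraph (Fin n)).edgeFinset with hu
  have hncard : ∀ G : SimpleGraph (Fin n), G.edgeSet.ncard = G.edgeFinset.card := by
    intro G; rw [Set.ncard_eq_toFinset_card']; congr 1
  have key : ∑ G : SimpleGraph (Fin n), a ^ G.edgeSet.ncard * b ^ (n.choose 2 - G.edgeSet.ncard)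
      = ∑ t ∈ u.powerset, a ^ t.card * b ^ (u.card - t.card) := by
    refine Finset.sum_nbij' (i := fun G => G.edgeFinset) (j := fun t => fromEdgeSet ↑t)
      ?_ ?_ ?_ ?_ ?_
    · intro G _
      simp only [Finset.mem_powerset]
      exact edgeFinset_mono le_top
    · intro t _; exact Finset.mem_univ _
    · intro G _
      simp [fromEdgeSet_edgeSet]
    · intro t ht
      simp only [Finset.mem_powerset] at ht
      have hnd : ∀ e ∈ (t : Set (Sym2 (Fin n))), ¬ e.IsDiag := by
        intro e he
        have h2 := ht he
        rw [mem_edgeFinset] at h2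
        exact (⊤ : SimpleGraph (Fin n)).not_isDiag_of_mem_edgeSet h2
      have hes : (fromEdgeSet (↑t : Set (Sym2 (Fin n)))).edgeSet = ↑t := by
        rw [edgeSet_fromEdgeSet]
        ext e; simp only [Set.mem_diff, Set.mem_setOf_eq]
        exact ⟨fun h => h.1, fun h => ⟨h, hnd e h⟩⟩
      rw [← Finset.coe_inj, coe_edgeFinset, hes]
    · intro G _
      rw [hncard, hcard]
  rw [key, ← hcard]
  rw [← Finset.prod_const (a + b), Finset.prod_add]
  refine Finset.sum_congr rfl fun t ht => ?_
  rw [Finset.mem_powerset] at ht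
  rw [Finset.prod_const, Finset.prod_const, Finset.card_sdiff_of_subset ht]

/-- Chernoff-type bound: if `A` contains all graphs with fewer than `r` edges, then
`erProb n q A` is between `1 - (1+q)^(n choose 2) / 2^r` and `1`. -/
lemma erProb_bounds (n : ℕ) (q r : ℝ) (hq0 : 0 ≤ q) (hq1 : q ≤ 1)
    (A : Set (SimpleGraph (Fin n))) (hA : ∀ G, ((G.edgeSet.ncard : ℝ) < r) → G ∈ A) :
    1 - (1 + q) ^ (n.choose 2) / (2 : ℝ) ^ r ≤ erProb n q A ∧ erProb n q A ≤ 1 := by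
  classical
  set w : SimpleGraph (Fin n) → ℝ :=
    fun G => q ^ G.edgeSet.ncard * (1 - q) ^ (n.choose 2 - G.edgeSet.ncard) with hw
  have hw0 : ∀ G, 0 ≤ w G := fun G => by
    have h1 : (0:ℝ) ≤ 1 - q := by linarith
    positivity
  have htotal : ∑ G : SimpleGraph (Fin n), w G = 1 := by
    rw [hw]; rw [sum_graphs]; simp
  have h2r : (0:ℝ) < (2:ℝ) ^ r := Real.rpow_pos_of_pos (by norm_num) r
  constructor
  · -- lower bound
    set S : Set (SimpleGraph (Fin n)) := {G | (G.edgeSet.ncard : ℝ) < r} with hS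
    have hmono : ∀ G, S.indicator w G ≤ A.indicator w G := by
      intro G
      exact Set.indicator_le_indicator_of_subset (fun G hG => hA G hG) hw0 G
    have hsplit : ∀ G, S.indicator w G = w G - Sᶜ.indicator w G := by
      intro G
      by_cases h : G ∈ S
      · simp [Set.indicator_of_mem h, Set.indicator_of_notMem (by simpa using h : G ∉ Sᶜ)]
      · simp [Set.indicator_of_notMem h, Set.indicator_of_mem (by simpa using h : G ∈ Sᶜ)]
    have htail : ∑ G : SimpleGraph (Fin n), Sᶜ.indicator w G
        ≤ (1 + q) ^ (n.choose 2) / (2 : ℝ) ^ r := by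
      have hterm : ∀ G : SimpleGraph (Fin n), Sᶜ.indicator w G
          ≤ (2 * q) ^ G.edgeSet.ncard * (1 - q) ^ (n.choose 2 - G.edgeSet.ncard) / (2:ℝ) ^ r := by
        intro G
        by_cases h : G ∈ Sᶜ
        · rw [Set.indicator_of_mem h]
          have hr : r ≤ (G.edgeSet.ncard : ℝ) := by
            simpa [hS] using h
          have h2 : (2:ℝ) ^ r ≤ (2:ℝ) ^ (G.edgeSet.ncard : ℝ) :=
            Real.rpow_le_rpow_left_iff (by norm_num : (1:ℝ) < 2) |>.mpr hr
          rw [Real.rpow_natCast] at h2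
          rw [mul_pow, le_div_iff₀ h2r]
          have h1 : (0:ℝ) ≤ 1 - q := by linarith
          calc w G * (2:ℝ) ^ r ≤ w G * (2:ℝ) ^ G.edgeSet.ncard := by
                apply mul_le_mul_of_nonneg_left h2 (hw0 G)
            _ = 2 ^ G.edgeSet.ncard * q ^ G.edgeSet.ncard
                * (1 - q) ^ (n.choose 2 - G.edgeSet.ncard) := by ring
        · rw [Set.indicator_of_notMem h]
          have h1 : (0:ℝ) ≤ 1 - q := by linarith
          positivity
      calc ∑ G : SimpleGraph (Fin n), Sᶜ.indicator w G
          ≤ ∑ G : SimpleGraph (Fin n),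
            (2 * q) ^ G.edgeSet.ncard * (1 - q) ^ (n.choose 2 - G.edgeSet.ncard) / (2:ℝ) ^ r :=
            Finset.sum_le_sum fun G _ => hterm G
        _ = (1 + q) ^ (n.choose 2) / (2 : ℝ) ^ r := by
            rw [← Finset.sum_div, sum_graphs]
            ring_nf
    calc 1 - (1 + q) ^ (n.choose 2) / (2 : ℝ) ^ r
        ≤ 1 - ∑ G : SimpleGraph (Fin n), Sᶜ.indicator w G := by linarith
      _ = ∑ G : SimpleGraph (Fin n), S.indicator w G := by
          rw [← htotal, ← Finset.sum_sub_distrib]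
          exact Finset.sum_congr rfl fun G _ => (hsplit G).symm
      _ ≤ erProb n q A := Finset.sum_le_sum fun G _ => hmono G
  · -- upper bound
    calc erProb n q A ≤ ∑ G : SimpleGraph (Fin n), w G :=
        Finset.sum_le_sum fun G _ => Set.indicator_le_self' (fun G _ => hw0 G) G
      _ = 1 := htotal

/-- Let `ℓ > 0` and let `f` satisfy `ℓ n log n ≤ f n < n(n-1)/2` for all large `n`.
With `p n = (f n + n log log n) / n²`, w.h.p. `mc(G(n, p)) < f n`. -/
theorem whp_mc_lt_at_p (ℓ : ℝ) (hℓ : 0 < ℓ) (f : ℕ → ℝ)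
    (hf : ∀ᶠ n : ℕ in atTop,
      ℓ * n * Real.log n ≤ f n ∧ f n < (n : ℝ) * ((n : ℝ) - 1) / 2) :
    WHP (fun n => (f n + n * Real.log (Real.log n)) / (n : ℝ) ^ 2)
      (fun n => {G | (mcNum G : ℝ) < f n}) := by
  set q : ℕ → ℝ := fun n => (f n + n * Real.log (Real.log n)) / (n : ℝ) ^ 2 with hq
  have hexp : Real.exp (1/2) < 2 := by
    nlinarith [Real.exp_one_lt_d9, Real.exp_pos (1/2), Real.exp_add (1/2) (1/2)]
  have hδ0 : (0:ℝ) < Real.log 2 - 1/2 := by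
    have : (1:ℝ)/2 < Real.log 2 := (Real.lt_log_iff_exp_lt (by norm_num)).mpr hexp
    linarith
  have hlog : Tendsto (fun n : ℕ => Real.log n) atTop atTop :=
    Real.tendsto_log_atTop.comp tendsto_natCast_atTop_atTop
  have hll : Tendsto (fun n : ℕ => Real.log (Real.log n) / Real.log n) atTop (nhds 0) :=
    (Real.isLittleO_log_id_atTop.tendsto_div_nhds_zero).comp hlog
  have hlgn : Tendsto (fun n : ℕ => Real.log n / n) atTop (nhds 0) :=
    (Real.isLittleO_log_id_atTop.tendsto_div_nhds_zero).comp tendsto_natCast_atTop_atTop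
  have hllT : Tendsto (fun n : ℕ => Real.log (Real.log n)) atTop atTop :=
    Real.tendsto_log_atTop.comp hlog
  have hev1 : ∀ᶠ n : ℕ in atTop,
      Real.log (Real.log n) ≤ (Real.log 2 - 1/2) * ℓ * Real.log n := by
    filter_upwards [hll.eventually (gt_mem_nhds (by positivity : (0:ℝ) < (Real.log 2 - 1/2) * ℓ)),
      hlog.eventually_gt_atTop 0] with n h1 h2
    rw [div_lt_iff₀ h2] at h1
    linarith
  have hfl : Tendsto (fun n : ℕ => ℓ * n * Real.log n) atTop atTop := by
    have : Tendsto (fun n : ℕ => (n : ℝ) * Real.log n) atTop atTop :=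
      Tendsto.atTop_mul_atTop₀ tendsto_natCast_atTop_atTop hlog
    simpa [mul_assoc] using this.const_mul_atTop hℓ
  -- the exponent tends to -∞
  have key : ∀ᶠ n : ℕ in atTop,
      q n * (n.choose 2 : ℝ) - f n * Real.log 2
        ≤ -((Real.log 2 - 1/2)/2) * (ℓ * n * Real.log n) := by
    filter_upwards [hf, hev1, hlog.eventually_ge_atTop 0, hllT.eventually_ge_atTop 0,
      eventually_gt_atTop 0] with n hfn h1 h2 hLL hn
    obtain ⟨hfl', hfu⟩ := hfn
    have hn0 : (0:ℝ) < n := by exact_mod_cast hn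
    have hL0 : 0 ≤ f n := le_trans (by positivity) hfl'
    have hnL : (n:ℝ) * Real.log (Real.log n) ≤ (Real.log 2 - 1/2) * f n := by
      calc (n:ℝ) * Real.log (Real.log n) ≤ (n:ℝ) * ((Real.log 2 - 1/2) * ℓ * Real.log n) :=
          mul_le_mul_of_nonneg_left h1 (le_of_lt hn0)
        _ = (Real.log 2 - 1/2) * (ℓ * n * Real.log n) := by ring
        _ ≤ (Real.log 2 - 1/2) * f n := mul_le_mul_of_nonneg_left hfl' (le_of_lt hδ0)
    have hchoose : (n.choose 2 : ℝ) = (n:ℝ) * ((n:ℝ) - 1) / 2 := by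
      rw [Nat.cast_choose_two]
    have hnum : 0 ≤ f n + (n:ℝ) * Real.log (Real.log n) := by
      nlinarith [mul_nonneg hn0.le hLL]
    have hqC : q n * (n.choose 2 : ℝ) ≤ (f n + (n:ℝ) * Real.log (Real.log n)) / 2 := by
      rw [hq, hchoose]
      have heq : (f n + (n:ℝ) * Real.log (Real.log n)) / (n:ℝ)^2 * ((n:ℝ) * ((n:ℝ) - 1) / 2)
          = (f n + (n:ℝ) * Real.log (Real.log n)) * (((n:ℝ) * ((n:ℝ) - 1)) / (n:ℝ)^2) / 2 := by
        field_simp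
      rw [heq]
      have hfrac : ((n:ℝ) * ((n:ℝ) - 1)) / (n:ℝ)^2 ≤ 1 := by
        rw [div_le_one (by positivity)]; nlinarith
      have := mul_le_of_le_one_right hnum hfrac
      linarith
    nlinarith [hqC, hnL, mul_nonneg hδ0.le (sub_nonneg.mpr hfl')]
  have hbot : Tendsto (fun n : ℕ => q n * (n.choose 2 : ℝ) - f n * Real.log 2) atTop atBot := by
    have hneg : Tendsto (fun n : ℕ => -((Real.log 2 - 1/2)/2) * (ℓ * n * Real.log n))
        atTop atBot := hfl.const_mul_atTop_of_neg (by linarith)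
    exact tendsto_atBot_mono' atTop key hneg
  -- the error term u tends to 0
  set u : ℕ → ℝ := fun n => (1 + q n) ^ (n.choose 2) / (2 : ℝ) ^ (f n) with hudef
  -- eventual bounds on q
  have hq01 : ∀ᶠ n : ℕ in atTop, 0 ≤ q n ∧ q n ≤ 1 := by
    filter_upwards [hf, hlog.eventually_ge_atTop 0, hllT.eventually_ge_atTop 0,
      hlgn.eventually (gt_mem_nhds (by norm_num : (0:ℝ) < 1/2)),
      eventually_gt_atTop 0] with n hfn h2 hLL hlg hn
    obtain ⟨hfl', hfu⟩ := hfn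
    have hn0 : (0:ℝ) < n := by exact_mod_cast hn
    have hL0 : 0 ≤ f n := le_trans (by positivity) hfl'
    have hnL0 : 0 ≤ (n:ℝ) * Real.log (Real.log n) := mul_nonneg hn0.le hLL
    constructor
    · rw [hq]
      exact div_nonneg (by linarith) (by positivity)
    · rw [hq, div_le_one (by positivity)]
      rw [div_lt_iff₀ hn0] at hlg
      have hlgself : Real.log (Real.log n) ≤ Real.log n := Real.log_le_self h2
      have : (n:ℝ) * Real.log (Real.log n) ≤ (n:ℝ) * ((n:ℝ)/2) := by
        apply mul_le_mul_of_nonneg_left _ hn0.le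
        calc Real.log (Real.log n) ≤ Real.log n := hlgself
          _ ≤ 1/2 * n := hlg.le
          _ = (n:ℝ)/2 := by ring
      nlinarith
  have hu0 : Tendsto u atTop (nhds 0) := by
    have hub : ∀ᶠ n : ℕ in atTop,
        u n ≤ Real.exp (q n * (n.choose 2 : ℝ) - f n * Real.log 2) := by
      filter_upwards [hq01] with n hn
      obtain ⟨hq0, hq1'⟩ := hn
      have h1q : (0:ℝ) ≤ 1 + q n := by linarith
      have hpow : (1 + q n) ^ (n.choose 2) ≤ Real.exp (q n * (n.choose 2 : ℝ)) := by
        calc (1 + q n) ^ (n.choose 2) ≤ (Real.exp (q n)) ^ (n.choose 2) :=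
            pow_le_pow_left₀ h1q (by linarith [Real.add_one_le_exp (q n)]) _
          _ = Real.exp (q n * (n.choose 2 : ℝ)) := by
            rw [← Real.exp_nat_mul]; ring_nf
      have h2f : (2:ℝ) ^ (f n) = Real.exp (f n * Real.log 2) := by
        rw [Real.rpow_def_of_pos (by norm_num : (0:ℝ) < 2)]; ring_nf
      rw [hudef]
      simp only
      rw [h2f, div_le_iff₀ (Real.exp_pos _), ← Real.exp_add]
      calc (1 + q n) ^ (n.choose 2) ≤ Real.exp (q n * (n.choose 2 : ℝ)) := hpow
        _ = Real.exp (q n * (n.choose 2 : ℝ) - f n * Real.log 2 + f n * Real.log 2) := by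
          ring_nf
    have hex : Tendsto (fun n : ℕ => Real.exp (q n * (n.choose 2 : ℝ) - f n * Real.log 2))
        atTop (nhds 0) := Real.tendsto_exp_atBot.comp hbot
    have hlb : ∀ᶠ n : ℕ in atTop, 0 ≤ u n := by
      filter_upwards [hq01] with n hn
      have h1q : (0:ℝ) ≤ 1 + q n := by linarith [hn.1]
      have := Real.rpow_pos_of_pos (by norm_num : (0:ℝ) < 2) (f n)
      positivity
    exact tendsto_of_tendsto_of_tendsto_of_le_of_le' tendsto_const_nhds hex hlb hub
  -- combine
  rw [WHP]
  have hbdd : ∀ᶠ n : ℕ in atTop,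
      1 - u n ≤ erProb n (q n) {G | (mcNum G : ℝ) < f n}
        ∧ erProb n (q n) {G | (mcNum G : ℝ) < f n} ≤ 1 := by
    filter_upwards [hq01] with n hn
    refine erProb_bounds n (q n) (f n) hn.1 hn.2 _ ?_
    intro G hG
    have := mcNum_le_ncard G
    have hcast : (mcNum G : ℝ) ≤ (G.edgeSet.ncard : ℝ) := by exact_mod_cast this
    exact Set.mem_setOf_eq ▸ lt_of_le_of_lt hcast hG
  have hlow : Tendsto (fun n : ℕ => 1 - u n) atTop (nhds 1) := by
    have : Tendsto (fun n : ℕ => 1 - u n) atTop (nhds (1 - 0)) :=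
      tendsto_const_nhds.sub hu0
    simpa using this
  exact tendsto_of_tendsto_of_tendsto_of_le_of_le' hlow tendsto_const_nhds
    (hbdd.mono fun n h => h.1) (hbdd.mono fun n h => h.2)
end
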